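/- arXiv:0709.1670 — 3 statements merged into one kernel-verified Lean document; each statement's English description precedes it below -/
import Mathlib

section
/- Let d ≥ 1 be an integer, ν > d/2 and λ > 2√d. Then (2π)^{−d} ∑_{h∈ℤ^d, |h|≥λ} (1+|h|²)^{−ν} ≤ (1+d)^ν / (2^{d−1} π^{d/2} Γ(d/2) (2ν−d) (λ−√d)^{2ν−d}). -/
open Set

/-- The Euclidean norm of a lattice point `h ∈ ℤ^d`. -/
noncomputable def znorm {d : ℕ} (h : Fin d → ℤ) : ℝ :=
  Real.sqrt (∑ i, ((h i : ℝ)) ^ 2)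

open MeasureTheory
open scoped ENNReal NNReal

namespace Stmt17Aux

variable {d : ℕ}

/-- A lattice point as an element of Euclidean space. -/
noncomputable def zemb (h : Fin d → ℤ) : EuclideanSpace ℝ (Fin d) :=
  WithLp.toLp 2 (fun i => ((h i : ℝ)))

lemma zemb_apply (h : Fin d → ℤ) (i : Fin d) : zemb h i = (h i : ℝ) := rfl

lemma znorm_eq_norm (h : Fin d → ℤ) : znorm h = ‖zemb h‖ := by
  rw [EuclideanSpace.norm_eq, znorm]
  congr 1
  refine Finset.sum_congr rfl fun i _ => ?_
  rw [Real.norm_eq_abs, sq_abs, zemb_apply]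

/-- The half-open unit cube based at `h`, inside Euclidean space. -/
def cube (h : Fin d → ℤ) : Set (EuclideanSpace ℝ (Fin d)) :=
  (MeasurableEquiv.toLp 2 (Fin d → ℝ)).symm ⁻¹' (Set.univ.pi fun i => Ico ((h i : ℝ)) (h i + 1))

lemma mem_cube {h : Fin d → ℤ} {x : EuclideanSpace ℝ (Fin d)} :
    x ∈ cube h ↔ ∀ i, (h i : ℝ) ≤ x i ∧ x i < (h i : ℝ) + 1 := by
  simp [cube, MeasurableEquiv.coe_toLp_symm, Set.mem_pi]

lemma cube_measurable (h : Fin d → ℤ) : MeasurableSet (cube h) :=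
  (MeasurableEquiv.toLp 2 (Fin d → ℝ)).symm.measurable
    (MeasurableSet.univ_pi fun _ => measurableSet_Ico)

lemma volume_cube (h : Fin d → ℤ) : volume (cube h) = 1 := by
  rw [cube, (EuclideanSpace.volume_preserving_symm_measurableEquiv_toLp (Fin d)).measure_preimage
    ((MeasurableSet.univ_pi fun _ => measurableSet_Ico).nullMeasurableSet)]
  rw [volume_pi_pi]
  simp [Real.volume_Ico]

lemma cube_disjoint {h h' : Fin d → ℤ} (hne : h ≠ h') : Disjoint (cube h) (cube h') := by
  rw [Set.disjoint_left]
  rintro x hx hx'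
  rw [mem_cube] at hx hx'
  apply hne
  funext i
  have e1 : ⌊x i⌋ = h i := Int.floor_eq_iff.2 ⟨(hx i).1, (hx i).2⟩
  have e2 : ⌊x i⌋ = h' i := Int.floor_eq_iff.2 ⟨(hx' i).1, (hx' i).2⟩
  rw [← e1, e2]

lemma cube_dist {h : Fin d → ℤ} {x : EuclideanSpace ℝ (Fin d)} (hx : x ∈ cube h) :
    ‖x - zemb h‖ ≤ Real.sqrt d := by
  rw [mem_cube] at hx
  rw [EuclideanSpace.norm_eq]
  apply Real.sqrt_le_sqrt
  calc ∑ i, ‖(x - zemb h) i‖ ^ 2 ≤ ∑ _i : Fin d, 1 := by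
        refine Finset.sum_le_sum fun i _ => ?_
        have hsub : (x - zemb h) i = x i - (h i : ℝ) := by rw [PiLp.sub_apply, zemb_apply]
        rw [hsub, Real.norm_eq_abs, sq_abs]
        nlinarith [(hx i).1, (hx i).2]
    _ = (d : ℝ) := by simp

lemma radial_integral (hd : 1 ≤ d) (ν R : ℝ) (hν : (d:ℝ)/2 < ν) (hR : 0 < R) :
    ∫ x : EuclideanSpace ℝ (Fin d),
        (Ici R).indicator (fun r : ℝ => ((r^2 : ℝ)) ^ (-ν)) ‖x‖ =
      (d : ℝ) * (Real.sqrt Real.pi ^ d / Real.Gamma ((d:ℝ)/2 + 1)) *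
        (R ^ ((d:ℝ) - 2*ν) / (2*ν - (d:ℝ))) := by
  haveI : Nonempty (Fin d) := ⟨⟨0, hd⟩⟩
  rw [MeasureTheory.integral_fun_norm_addHaar volume
      (fun r : ℝ => (Ici R).indicator (fun r : ℝ => ((r^2 : ℝ)) ^ (-ν)) r)]
  rw [finrank_euclideanSpace_fin]
  have hball : ((volume (Metric.ball (0 : EuclideanSpace ℝ (Fin d)) 1)).toReal : ℝ)
      = Real.sqrt Real.pi ^ d / Real.Gamma ((d:ℝ)/2 + 1) := by
    rw [EuclideanSpace.volume_ball, Fintype.card_fin]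
    have hΓ : 0 < Real.Gamma ((d:ℝ)/2 + 1) := Real.Gamma_pos_of_pos (by positivity)
    simp [ENNReal.toReal_ofReal
      (by positivity : (0:ℝ) ≤ Real.sqrt Real.pi ^ d / Real.Gamma ((d:ℝ)/2 + 1))]
  rw [measureReal_def, hball]
  have hI : ∫ y in Ioi (0:ℝ), y ^ (d-1) • (Ici R).indicator (fun r : ℝ => ((r^2 : ℝ)) ^ (-ν)) y
      = R ^ ((d:ℝ) - 2*ν) / (2*ν - (d:ℝ)) := by
    have h1 : ∀ y : ℝ, y ^ (d-1) • (Ici R).indicator (fun r : ℝ => ((r^2 : ℝ)) ^ (-ν)) y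
        = (Ici R).indicator (fun y : ℝ => y ^ (d-1) * ((y^2 : ℝ)) ^ (-ν)) y := by
      intro y; by_cases hy : y ∈ Ici R <;> simp [hy]
    simp only [h1]
    have hss : Ici R ∩ Ioi (0:ℝ) = Ici R := inter_eq_left.mpr fun y hy => hR.trans_le hy
    rw [MeasureTheory.integral_indicator measurableSet_Ici,
      Measure.restrict_restrict measurableSet_Ici, hss,
      MeasureTheory.integral_Ici_eq_integral_Ioi]
    have h2 : ∀ y ∈ Ioi R, y ^ (d-1) * ((y^2 : ℝ)) ^ (-ν) = y ^ ((d:ℝ) - 1 - 2*ν) := by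
      intro y hy
      have hy0 : (0:ℝ) < y := hR.trans hy
      rw [show ((y^2 : ℝ)) ^ (-ν) = y ^ (-(2*ν)) by
        rw [← Real.rpow_natCast y 2, ← Real.rpow_mul hy0.le]; norm_num,
        ← Real.rpow_natCast y (d-1), Nat.cast_sub hd, ← Real.rpow_add hy0]
      norm_num
      ring_nf
    rw [MeasureTheory.setIntegral_congr_fun measurableSet_Ioi h2,
      integral_Ioi_rpow_of_lt (by linarith) hR]
    rw [show (d:ℝ) - 1 - 2*ν + 1 = (d:ℝ) - 2*ν by ring,
      div_eq_div_iff (ne_of_lt (by linarith)) (ne_of_gt (by linarith))]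
    ring
  rw [hI, nsmul_eq_mul, smul_eq_mul]
  ring

lemma integrable_indicator_aux (ν R : ℝ) (hν : (d:ℝ)/2 < ν) (hR : 0 < R) :
    Integrable (fun x : EuclideanSpace ℝ (Fin d) =>
      ({x : EuclideanSpace ℝ (Fin d) | R ≤ ‖x‖}).indicator
        (fun x => ((‖x‖^2 : ℝ)) ^ (-ν)) x) := by
  have hA : MeasurableSet {x : EuclideanSpace ℝ (Fin d) | R ≤ ‖x‖} :=
    measurableSet_le measurable_const measurable_norm
  have hfin : (Module.finrank ℝ (EuclideanSpace ℝ (Fin d)) : ℝ) < 2*ν := by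
    rw [finrank_euclideanSpace_fin]; linarith
  have hg : Integrable (fun x : EuclideanSpace ℝ (Fin d) =>
      (1 + 1/R) ^ (2*ν) * (1 + ‖x‖) ^ (-(2*ν))) :=
    (integrable_one_add_norm hfin).const_mul _
  refine hg.mono' ?_ ?_
  · exact (Measurable.indicator
      (by fun_prop : Measurable fun x : EuclideanSpace ℝ (Fin d) => ((‖x‖^2 : ℝ)) ^ (-ν))
      hA).aestronglyMeasurable
  · refine Filter.Eventually.of_forall fun x => ?_
    rw [Real.norm_eq_abs, abs_of_nonneg (Set.indicator_nonneg (fun y _ => by positivity) x)]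
    by_cases hx : x ∈ {x : EuclideanSpace ℝ (Fin d) | R ≤ ‖x‖}
    · rw [Set.indicator_of_mem hx]
      have hxR : R ≤ ‖x‖ := hx
      have hx0 : (0:ℝ) < ‖x‖ := hR.trans_le hxR
      have e1 : ((‖x‖^2 : ℝ)) ^ (-ν) = ‖x‖ ^ (-(2*ν)) := by
        rw [← Real.rpow_natCast ‖x‖ 2, ← Real.rpow_mul hx0.le]; norm_num
      rw [e1]
      have key : (1 + 1/R)⁻¹ * (1 + ‖x‖) ≤ ‖x‖ := by
        have h2 : (1:ℝ) ≤ ‖x‖ / R := (one_le_div hR).2 hxR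
        have h3 : (1:ℝ) ≤ 1/R * ‖x‖ := by rw [one_div, inv_mul_eq_div]; exact h2
        have h1 : 1 + ‖x‖ ≤ (1 + 1/R) * ‖x‖ := by nlinarith
        rw [inv_mul_le_iff₀ (by positivity)]
        linarith [h1]
      calc ‖x‖ ^ (-(2*ν)) ≤ ((1 + 1/R)⁻¹ * (1 + ‖x‖)) ^ (-(2*ν)) :=
            Real.rpow_le_rpow_of_nonpos (by positivity) key (by linarith)
        _ = (1 + 1/R) ^ (2*ν) * (1 + ‖x‖) ^ (-(2*ν)) := by
            rw [Real.mul_rpow (by positivity) (by positivity), Real.inv_rpow (by positivity),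
              ← Real.rpow_neg (by positivity), neg_neg]
    · rw [Set.indicator_of_notMem hx]
      positivity

lemma pointwise_aux (ν : ℝ) (hν0 : 0 < ν) (t : ℝ) (x : EuclideanSpace ℝ (Fin d))
    (hxle : ‖x‖ ≤ t + Real.sqrt d) (hx0 : 0 < ‖x‖) :
    (1 + t^2) ^ (-ν) ≤ (1 + (d:ℝ)) ^ ν * ((‖x‖^2 : ℝ)) ^ (-ν) := by
  have hs : Real.sqrt d ^ 2 = (d:ℝ) := Real.sq_sqrt (Nat.cast_nonneg d)
  have key : ‖x‖^2 ≤ (1 + (d:ℝ)) * (1 + t^2) := by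
    nlinarith [sq_nonneg (Real.sqrt d * t - 1), norm_nonneg x, Real.sqrt_nonneg (d:ℝ)]
  calc (1 + t^2) ^ (-ν)
      = (1 + (d:ℝ)) ^ ν * (((1 + (d:ℝ)) * (1 + t^2)) ^ (-ν)) := by
        rw [Real.mul_rpow (by positivity) (by positivity), ← mul_assoc,
          ← Real.rpow_add (by positivity), add_neg_cancel, Real.rpow_zero, one_mul]
    _ ≤ (1 + (d:ℝ)) ^ ν * ((‖x‖^2 : ℝ)) ^ (-ν) := by
        refine mul_le_mul_of_nonneg_left ?_ (by positivity)
        exact Real.rpow_le_rpow_of_nonpos (by positivity) key (by linarith)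

end Stmt17Aux

open Stmt17Aux

/-- Tail estimate for lattice sums: for `ν > d/2` and `λ > 2√d`,
`(2π)^{−d} ∑_{|h| ≥ λ} (1+|h|²)^{−ν} ≤ (1+d)^ν / (2^{d−1} π^{d/2} Γ(d/2) (2ν−d) (λ−√d)^{2ν−d})`. -/
theorem stmt_17 (d : ℕ) (hd : 1 ≤ d) (ν lam : ℝ)
    (hν : (d : ℝ) / 2 < ν) (hlam : 2 * Real.sqrt d < lam) :
    Summable (fun h : {h : Fin d → ℤ // lam ≤ znorm h} =>
      (1 + znorm h.1 ^ 2) ^ (-ν)) ∧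
    (∑' h : {h : Fin d → ℤ // lam ≤ znorm h}, (1 + znorm h.1 ^ 2) ^ (-ν)) /
        (2 * Real.pi) ^ d ≤
      ((1 : ℝ) + d) ^ ν /
        (2 ^ (d - 1) * Real.pi ^ ((d : ℝ) / 2) * Real.Gamma ((d : ℝ) / 2) *
          (2 * ν - d) * (lam - Real.sqrt d) ^ (2 * ν - (d : ℝ))) := by
  have hd0 : (0:ℝ) < d := by exact_mod_cast hd
  have hs0 : 0 < Real.sqrt d := Real.sqrt_pos.2 hd0
  set R := lam - Real.sqrt d with hR_def
  have hR : 0 < R := by simp only [hR_def]; linarith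
  have hν0 : 0 < ν := lt_of_le_of_lt (by positivity) hν
  set A : Set (EuclideanSpace ℝ (Fin d)) := {x | R ≤ ‖x‖} with hA_def
  have hA : MeasurableSet A := measurableSet_le measurable_const measurable_norm
  -- bounds on cubes
  have hnormx : ∀ (h : Fin d → ℤ), lam ≤ znorm h → ∀ x ∈ cube h,
      R ≤ ‖x‖ ∧ ‖x‖ ≤ znorm h + Real.sqrt d := by
    intro h hh x hx
    have h1 : ‖x - zemb h‖ ≤ Real.sqrt d := cube_dist hx
    have h2 : ‖zemb h‖ - ‖x‖ ≤ ‖x - zemb h‖ := by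
      calc ‖zemb h‖ - ‖x‖ ≤ ‖zemb h - x‖ := norm_sub_norm_le _ _
        _ = ‖x - zemb h‖ := norm_sub_rev _ _
    have h3 : ‖x‖ ≤ ‖x - zemb h‖ + ‖zemb h‖ := by
      calc ‖x‖ = ‖(x - zemb h) + zemb h‖ := by rw [sub_add_cancel]
        _ ≤ ‖x - zemb h‖ + ‖zemb h‖ := norm_add_le _ _
    rw [← znorm_eq_norm] at h2 h3
    constructor
    · simp only [hR_def]; linarith
    · linarith
  have hcubesub : ∀ (h : Fin d → ℤ), lam ≤ znorm h → cube h ⊆ A := by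
    intro h hh x hx
    exact (hnormx h hh x hx).1
  have hpt : ∀ (h : Fin d → ℤ), lam ≤ znorm h → ∀ x ∈ cube h,
      (1 + znorm h ^ 2) ^ (-ν) ≤ (1 + (d:ℝ)) ^ ν * ((‖x‖^2 : ℝ)) ^ (-ν) := by
    intro h hh x hx
    obtain ⟨hx1, hx2⟩ := hnormx h hh x hx
    exact pointwise_aux ν hν0 (znorm h) x hx2 (hR.trans_le hx1)
  -- the dominating function
  set G : EuclideanSpace ℝ (Fin d) → ℝ≥0∞ :=
    fun x => ENNReal.ofReal ((1 + (d:ℝ)) ^ ν * ((‖x‖^2 : ℝ)) ^ (-ν)) with hG_def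
  -- step 1 : per-cube bound
  have hstep1 : ∀ h : {h : Fin d → ℤ // lam ≤ znorm h},
      ENNReal.ofReal ((1 + znorm h.1 ^ 2) ^ (-ν)) ≤ ∫⁻ x in cube h.1, G x := by
    intro h
    calc ENNReal.ofReal ((1 + znorm h.1 ^ 2) ^ (-ν))
        = ∫⁻ x in cube h.1, ENNReal.ofReal ((1 + znorm h.1 ^ 2) ^ (-ν)) := by
          rw [MeasureTheory.setLIntegral_const, volume_cube, mul_one]
      _ ≤ ∫⁻ x in cube h.1, G x :=
          setLIntegral_mono' (cube_measurable _)
            (fun x hx => ENNReal.ofReal_le_ofReal (hpt h.1 h.2 x hx))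
  -- step 2 : chain through the union
  have hchain : (∑' h : {h : Fin d → ℤ // lam ≤ znorm h},
      ENNReal.ofReal ((1 + znorm h.1 ^ 2) ^ (-ν))) ≤ ∫⁻ x in A, G x := by
    calc (∑' h : {h : Fin d → ℤ // lam ≤ znorm h},
          ENNReal.ofReal ((1 + znorm h.1 ^ 2) ^ (-ν)))
        ≤ ∑' h : {h : Fin d → ℤ // lam ≤ znorm h}, ∫⁻ x in cube h.1, G x :=
          ENNReal.tsum_le_tsum hstep1
      _ = ∫⁻ x in ⋃ h : {h : Fin d → ℤ // lam ≤ znorm h}, cube h.1, G x :=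
          (lintegral_iUnion (fun h => cube_measurable _)
            (fun h h' hne => cube_disjoint (fun e => hne (Subtype.ext e))) _).symm
      _ ≤ ∫⁻ x in A, G x :=
          lintegral_mono_set (Set.iUnion_subset fun h => hcubesub h.1 h.2)
  -- step 3 : compute the integral
  set B : ℝ := (1 + (d:ℝ)) ^ ν * ((d : ℝ) *
      (Real.sqrt Real.pi ^ d / Real.Gamma ((d:ℝ)/2 + 1)) *
      (R ^ ((d:ℝ) - 2*ν) / (2*ν - (d:ℝ)))) with hB_def
  have hB0 : 0 ≤ B := by
    have hΓ : 0 < Real.Gamma ((d:ℝ)/2 + 1) := Real.Gamma_pos_of_pos (by positivity)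
    have : 0 < 2*ν - (d:ℝ) := by linarith
    positivity
  have hval : ∫⁻ x in A, G x = ENNReal.ofReal B := by
    have hind : Integrable (fun x : EuclideanSpace ℝ (Fin d) =>
        A.indicator (fun x => ((‖x‖^2 : ℝ)) ^ (-ν)) x) :=
      integrable_indicator_aux ν R hν hR
    have hIOn : IntegrableOn (fun x : EuclideanSpace ℝ (Fin d) =>
        (1 + (d:ℝ)) ^ ν * ((‖x‖^2 : ℝ)) ^ (-ν)) A := by
      exact ((integrable_indicator_iff hA).1 hind).const_mul _
    rw [hG_def, ← MeasureTheory.ofReal_integral_eq_lintegral_ofReal hIOn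
      (Filter.Eventually.of_forall fun x => by positivity)]
    congr 1
    rw [MeasureTheory.integral_const_mul]
    have hφ : ∫ x in A, ((‖x‖^2 : ℝ)) ^ (-ν) =
        ∫ x : EuclideanSpace ℝ (Fin d),
          (Ici R).indicator (fun r : ℝ => ((r^2 : ℝ)) ^ (-ν)) ‖x‖ := by
      rw [← MeasureTheory.integral_indicator hA]
      refine integral_congr_ae (Filter.Eventually.of_forall fun x => ?_)
      by_cases hx : R ≤ ‖x‖
      · simp only [Set.indicator_of_mem (show x ∈ A from hx),
          Set.indicator_of_mem (mem_Ici.2 hx)]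
      · simp only [Set.indicator_of_notMem (show x ∉ A from hx),
          Set.indicator_of_notMem (fun h : ‖x‖ ∈ Ici R => hx h)]
    rw [hφ, radial_integral hd ν R hν hR, hB_def]
  have hTle : (∑' h : {h : Fin d → ℤ // lam ≤ znorm h},
      ENNReal.ofReal ((1 + znorm h.1 ^ 2) ^ (-ν))) ≤ ENNReal.ofReal B := by
    rw [← hval]; exact hchain
  have hTne : (∑' h : {h : Fin d → ℤ // lam ≤ znorm h},
      ENNReal.ofReal ((1 + znorm h.1 ^ 2) ^ (-ν))) ≠ ⊤ :=
    ne_top_of_le_ne_top ENNReal.ofReal_ne_top hTle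
  have hsummable : Summable (fun h : {h : Fin d → ℤ // lam ≤ znorm h} =>
      (1 + znorm h.1 ^ 2) ^ (-ν)) := by
    have h1 := ENNReal.summable_toReal hTne
    refine h1.congr fun h => ?_
    exact ENNReal.toReal_ofReal (by positivity)
  refine ⟨hsummable, ?_⟩
  have hsum_le : (∑' h : {h : Fin d → ℤ // lam ≤ znorm h},
      (1 + znorm h.1 ^ 2) ^ (-ν)) ≤ B := by
    have h1 : (∑' h : {h : Fin d → ℤ // lam ≤ znorm h}, (1 + znorm h.1 ^ 2) ^ (-ν)) =
        (∑' h : {h : Fin d → ℤ // lam ≤ znorm h},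
          ENNReal.ofReal ((1 + znorm h.1 ^ 2) ^ (-ν))).toReal := by
      rw [ENNReal.tsum_toReal_eq (fun h => ENNReal.ofReal_ne_top)]
      exact tsum_congr fun h => (ENNReal.toReal_ofReal (by positivity)).symm
    rw [h1]
    exact ENNReal.toReal_le_of_le_ofReal hB0 hTle
  -- final arithmetic
  have hΓpos : 0 < Real.Gamma ((d:ℝ)/2) := Real.Gamma_pos_of_pos (by positivity)
  have hPpos : 0 < Real.pi ^ ((d:ℝ)/2) := Real.rpow_pos_of_pos Real.pi_pos _
  have hRp : 0 < R ^ (2*ν - (d:ℝ)) := Real.rpow_pos_of_pos hR _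
  have h2ν : 0 < 2*ν - (d:ℝ) := by linarith
  have hfinal : B / (2*Real.pi)^d =
      ((1 : ℝ) + d) ^ ν /
        (2 ^ (d - 1) * Real.pi ^ ((d : ℝ) / 2) * Real.Gamma ((d : ℝ) / 2) *
          (2 * ν - d) * R ^ (2 * ν - (d : ℝ))) := by
    have e1 : Real.sqrt Real.pi ^ d = Real.pi ^ ((d:ℝ)/2) := by
      rw [Real.sqrt_eq_rpow, ← Real.rpow_natCast (Real.pi ^ ((1:ℝ)/2)) d,
        ← Real.rpow_mul Real.pi_pos.le]
      norm_num
      ring_nf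
    have e2 : Real.Gamma ((d:ℝ)/2 + 1) = ((d:ℝ)/2) * Real.Gamma ((d:ℝ)/2) :=
      Real.Gamma_add_one (by positivity)
    have e3 : R ^ ((d:ℝ) - 2*ν) = (R ^ (2*ν - (d:ℝ)))⁻¹ := by
      rw [show (d:ℝ) - 2*ν = -(2*ν - (d:ℝ)) by ring, Real.rpow_neg hR.le]
    have e4 : (2*Real.pi)^d = 2 * 2^(d-1) * (Real.pi ^ ((d:ℝ)/2) * Real.pi ^ ((d:ℝ)/2)) := by
      rw [mul_pow]
      congr 1
      · rw [← pow_succ' 2 (d-1), Nat.sub_add_cancel hd]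
      · rw [← Real.rpow_add Real.pi_pos, ← Real.rpow_natCast Real.pi d]
        norm_num
    rw [hB_def, e1, e2, e3, e4]
    have h2pow : (0:ℝ) < 2^(d-1) := by positivity
    field_simp
  calc (∑' h : {h : Fin d → ℤ // lam ≤ znorm h}, (1 + znorm h.1 ^ 2) ^ (-ν)) /
        (2 * Real.pi) ^ d
      ≤ B / (2*Real.pi)^d := by
        gcongr
      _ = _ := hfinal
end

section
/- Let d ≥ 2 be an integer and n > d/2 a real number. Then Σ_n := (2π)^{−d} ∑_{h∈ℤ^d} (1+|h|²)^{−n} is finite, and for every real cutoff λ ≥ 2√d one has 𝒮_n(λ) < Σ_n ≤ 𝒮_n(λ) + δ𝒮_n(λ), where 𝒮_n(λ) := (2π)^{−d} ∑_{h∈ℤ^d, |h|<λ} (1+|h|²)^{−n} and δ𝒮_n(λ) := (1+d)^n / (2^{d−1} π^{d/2} Γ(d/2) (2n−d) (λ−√d)^{2n−d}). -/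
open Set

namespace Stmt18Aux

open MeasureTheory Submodule
open scoped ENNReal

noncomputable def latmap (d : ℕ) (h : Fin d → ℤ) : EuclideanSpace ℝ (Fin d) := WithLp.toLp 2 (fun i => (h i : ℝ))

lemma norm_latmap (d : ℕ) (h : Fin d → ℤ) : ‖latmap d h‖ = znorm h := by
  rw [EuclideanSpace.norm_eq, znorm]
  congr 1
  exact Finset.sum_congr rfl fun i _ => by rw [latmap, PiLp.toLp_apply, Real.norm_eq_abs, sq_abs]

lemma znorm_nonneg {d : ℕ} (h : Fin d → ℤ) : 0 ≤ znorm h := Real.sqrt_nonneg _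

noncomputable def bE (d : ℕ) : Module.Basis (Fin d) ℝ (EuclideanSpace ℝ (Fin d)) :=
  (EuclideanSpace.basisFun (Fin d) ℝ).toBasis

lemma latmap_eq_sum (d : ℕ) (h : Fin d → ℤ) : latmap d h = ∑ i, h i • (bE d i) := by
  ext j
  rw [latmap]
  simp only [bE, OrthonormalBasis.coe_toBasis, EuclideanSpace.basisFun_apply]
  rw [WithLp.ofLp_sum, Finset.sum_apply, Finset.sum_eq_single j]
  · simp [EuclideanSpace.single_apply]
  · intro b _ hb; simp [EuclideanSpace.single_apply, Ne.symm hb]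
  · simp

lemma latmap_mem (d : ℕ) (h : Fin d → ℤ) : latmap d h ∈ span ℤ (Set.range (bE d)) := by
  rw [latmap_eq_sum]
  exact Submodule.sum_mem _ fun i _ =>
    Submodule.smul_mem _ (h i) (Submodule.subset_span ⟨i, rfl⟩)

lemma latmap_inj (d : ℕ) : Function.Injective (latmap d) := by
  intro h h' he
  funext i
  have : ((h i : ℝ)) = (h' i : ℝ) := congrArg (fun v : EuclideanSpace ℝ (Fin d) => v i) he
  exact_mod_cast this

lemma latmap_surj (d : ℕ) (x : EuclideanSpace ℝ (Fin d))
    (hx : x ∈ span ℤ (Set.range (bE d))) : ∃ h, latmap d h = x := by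
  refine Submodule.span_induction ?_ ?_ ?_ ?_ hx
  · rintro y ⟨i, rfl⟩
    refine ⟨fun j => if j = i then 1 else 0, ?_⟩
    ext j
    simp only [latmap, bE, OrthonormalBasis.coe_toBasis, EuclideanSpace.basisFun_apply]
    by_cases hj : j = i <;> simp [hj, EuclideanSpace.single_apply]
  · exact ⟨0, by ext j; simp [latmap]⟩
  · rintro y z - - ⟨hy, rfl⟩ ⟨hz, rfl⟩
    exact ⟨hy + hz, by ext j; simp [latmap]⟩
  · rintro z y - ⟨hy, rfl⟩
    exact ⟨z • hy, by ext j; simp [latmap]⟩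

noncomputable def equivLat (d : ℕ) : (Fin d → ℤ) ≃ span ℤ (Set.range (bE d)) :=
  Equiv.ofBijective (fun h => ⟨latmap d h, latmap_mem d h⟩)
    ⟨fun a b hab => latmap_inj d (by simpa using congrArg Subtype.val hab),
     fun ⟨x, hx⟩ => by obtain ⟨h, hh⟩ := latmap_surj d x hx; exact ⟨h, by simp [hh]⟩⟩

lemma norm_equivLat_symm (d : ℕ) (g : span ℤ (Set.range (bE d))) :
    znorm ((equivLat d).symm g) = ‖(g : EuclideanSpace ℝ (Fin d))‖ := by
  have h1 : (equivLat d) ((equivLat d).symm g) = g := (equivLat d).apply_symm_apply g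
  have h2 : latmap d ((equivLat d).symm g) = (g : EuclideanSpace ℝ (Fin d)) :=
    congrArg Subtype.val h1
  rw [← h2, norm_latmap]

lemma znorm_finite {d : ℕ} (c : ℝ) : {h : Fin d → ℤ | znorm h < c}.Finite := by
  have hsub : {h : Fin d → ℤ | znorm h < c} ⊆
      Set.pi Set.univ (fun _ : Fin d => Set.Icc (⌈-c⌉) ⌊c⌋) := by
    intro h hh i _
    have h1 : |(h i : ℝ)| ≤ znorm h := by
      rw [← Real.sqrt_sq_eq_abs, znorm]
      exact Real.sqrt_le_sqrt (Finset.single_le_sum (f := fun i => ((h i : ℝ))^2)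
        (fun i _ => sq_nonneg _) (Finset.mem_univ i))
    have h2 : |(h i : ℝ)| < c := lt_of_le_of_lt h1 hh
    rw [abs_lt] at h2
    constructor
    · exact_mod_cast Int.ceil_le.mpr (by exact_mod_cast h2.1.le)
    · exact_mod_cast Int.le_floor.mpr (by exact_mod_cast h2.2.le)
  exact Set.Finite.subset (Set.Finite.pi (fun _ => Set.finite_Icc _ _)) hsub

lemma volume_fd (d : ℕ) : volume (ZSpan.fundamentalDomain (bE d)) = 1 := by
  rw [measure_congr (ZSpan.fundamentalDomain_ae_parallelepiped (bE d) volume)]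
  have := (EuclideanSpace.basisFun (Fin d) ℝ).volume_parallelepiped
  rwa [bE]

lemma norm_fd {d : ℕ} (x : EuclideanSpace ℝ (Fin d))
    (hx : x ∈ ZSpan.fundamentalDomain (bE d)) : ‖x‖ ≤ Real.sqrt d := by
  rw [EuclideanSpace.norm_eq]
  have : ∑ i, ‖x i‖^2 ≤ (d : ℝ) := by
    calc ∑ i, ‖x i‖^2 ≤ ∑ _i : Fin d, (1:ℝ) := by
          refine Finset.sum_le_sum fun i _ => ?_
          have hi := hx i
          rw [bE, OrthonormalBasis.coe_toBasis_repr_apply, EuclideanSpace.basisFun_repr] at hi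
          have h0 : (0:ℝ) ≤ x i := hi.1
          have h1 : x i < 1 := hi.2
          rw [Real.norm_eq_abs, abs_of_nonneg h0]
          nlinarith
      _ = d := by simp
  exact Real.sqrt_le_sqrt this

lemma euclid_nontrivial (d : ℕ) (hd : 2 ≤ d) : Nontrivial (EuclideanSpace ℝ (Fin d)) := by
  refine nontrivial_of_ne (EuclideanSpace.single ⟨0, by omega⟩ (1:ℝ)) 0 ?_
  intro hcon
  have := congrArg (fun v : EuclideanSpace ℝ (Fin d) => v ⟨0, by omega⟩) hcon
  simp [EuclideanSpace.single_apply] at this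

lemma integral_eval (d : ℕ) (hd : 2 ≤ d) (n : ℝ) (hn : (d:ℝ)/2 < n) (R : ℝ) (hR : 1 ≤ R) :
    ∫ x : EuclideanSpace ℝ (Fin d), Set.indicator (Ici R) (fun r => r ^ (-(2*n))) ‖x‖ =
      d * (Real.sqrt Real.pi ^ d / Real.Gamma ((d:ℝ)/2 + 1)) *
        (R ^ ((d:ℝ) - 2*n) / (2*n - (d:ℝ))) := by
  haveI : Nonempty (Fin d) := ⟨⟨0, by omega⟩⟩
  haveI := euclid_nontrivial d hd
  have hR0 : (0:ℝ) < R := lt_of_lt_of_le one_pos hR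
  have hdim : Module.finrank ℝ (EuclideanSpace ℝ (Fin d)) = d := by
    simp [finrank_euclideanSpace]
  rw [integral_fun_norm_addHaar volume (Set.indicator (Ici R) (fun r => r ^ (-(2*n))))]
  rw [hdim]
  have hball : volume.real (Metric.ball (0 : EuclideanSpace ℝ (Fin d)) 1) =
      Real.sqrt Real.pi ^ d / Real.Gamma ((d:ℝ)/2 + 1) := by
    rw [measureReal_def, EuclideanSpace.volume_ball]
    simp only [Fintype.card_fin, ENNReal.ofReal_one, one_pow, one_mul]
    rw [ENNReal.toReal_ofReal]
    positivity
  rw [hball]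
  have key : (fun y : ℝ => y ^ (d - 1) • Set.indicator (Ici R) (fun r => r ^ (-(2*n))) y) =
      Set.indicator (Ici R) (fun y => y ^ ((d:ℝ) - 1 - 2*n)) := by
    funext y
    by_cases hy : y ∈ Ici R
    · rw [Set.indicator_of_mem hy, Set.indicator_of_mem hy, smul_eq_mul]
      have hy0 : (0:ℝ) < y := lt_of_lt_of_le hR0 hy
      rw [← Real.rpow_natCast y (d - 1), ← Real.rpow_add hy0]
      congr 1
      have h1d : 1 ≤ d := by omega
      push_cast [Nat.cast_sub h1d]
      ring
    · rw [Set.indicator_of_notMem hy, Set.indicator_of_notMem hy, smul_zero]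
  rw [key]
  rw [setIntegral_indicator measurableSet_Ici]
  have hinter : Ioi (0:ℝ) ∩ Ici R = Ici R :=
    Set.inter_eq_self_of_subset_right (fun y hy => lt_of_lt_of_le hR0 hy)
  rw [hinter, integral_Ici_eq_integral_Ioi,
    integral_Ioi_rpow_of_lt (by linarith) hR0]
  have he : (d:ℝ) - 1 - 2*n + 1 = (d:ℝ) - 2*n := by ring
  rw [he, nsmul_eq_mul, smul_eq_mul]
  have h2 : (d:ℝ) - 2*n ≠ 0 := by intro h; nlinarith
  have hΓ : Real.Gamma ((d:ℝ)/2 + 1) ≠ 0 :=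
    ne_of_gt (Real.Gamma_pos_of_pos (by positivity))
  have h3 : 2*n - (d:ℝ) ≠ 0 := by intro h; nlinarith
  field_simp
  ring

lemma ind_eq (d : ℕ) (n R : ℝ) :
    (fun x : EuclideanSpace ℝ (Fin d) => Set.indicator (Ici R) (fun r => r ^ (-(2*n))) ‖x‖) =
      Set.indicator {x : EuclideanSpace ℝ (Fin d) | R ≤ ‖x‖} (fun x => ‖x‖ ^ (-(2*n))) := by
  funext x
  by_cases hx : R ≤ ‖x‖
  · rw [Set.indicator_of_mem (by exact hx : ‖x‖ ∈ Ici R), Set.indicator_of_mem (by exact hx)]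
  · rw [Set.indicator_of_notMem (by exact hx), Set.indicator_of_notMem (by exact hx)]

lemma integrable_ind (d : ℕ) (hd : 2 ≤ d) (n : ℝ) (hn : (d:ℝ)/2 < n) (R : ℝ) (hR : 1 ≤ R) :
    Integrable (fun x : EuclideanSpace ℝ (Fin d) =>
      Set.indicator (Ici R) (fun r => r ^ (-(2*n))) ‖x‖) := by
  have hmeas : Measurable (fun x : EuclideanSpace ℝ (Fin d) =>
      Set.indicator (Ici R) (fun r => r ^ (-(2*n))) ‖x‖) := by
    rw [ind_eq]
    exact Measurable.indicator (by fun_prop) (measurable_norm measurableSet_Ici)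
  have hdr : (2:ℝ) ≤ (d:ℝ) := by exact_mod_cast hd
  have hnpos : (0:ℝ) < n := by linarith
  have hint : Integrable (fun x : EuclideanSpace ℝ (Fin d) =>
      (2:ℝ) ^ (2*n) * (1 + ‖x‖) ^ (-(2*n))) := by
    refine Integrable.const_mul ?_ _
    refine integrable_one_add_norm ?_
    rw [finrank_euclideanSpace, Fintype.card_fin]
    linarith
  refine hint.mono' hmeas.aestronglyMeasurable (Filter.Eventually.of_forall fun x => ?_)
  by_cases hx : R ≤ ‖x‖
  · rw [Set.indicator_of_mem (by exact hx : ‖x‖ ∈ Ici R)]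
    have hx1 : (1:ℝ) ≤ ‖x‖ := le_trans hR hx
    have hx0 : (0:ℝ) < ‖x‖ := lt_of_lt_of_le one_pos hx1
    rw [Real.norm_eq_abs, abs_of_nonneg (Real.rpow_nonneg hx0.le _)]
    have h1 : ((2:ℝ) * ‖x‖) ^ (-(2*n)) ≤ (1 + ‖x‖) ^ (-(2*n)) :=
      Real.rpow_le_rpow_of_nonpos (by linarith) (by linarith) (by linarith)
    have h2 : ((2:ℝ) * ‖x‖) ^ (-(2*n)) = 2 ^ (-(2*n)) * ‖x‖ ^ (-(2*n)) :=
      Real.mul_rpow (by norm_num) hx0.le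
    have h3 : (2:ℝ) ^ (2*n) * (2 ^ (-(2*n)) * ‖x‖ ^ (-(2*n))) = ‖x‖ ^ (-(2*n)) := by
      rw [← mul_assoc, ← Real.rpow_add two_pos]
      simp
    calc ‖x‖ ^ (-(2*n)) = (2:ℝ) ^ (2*n) * (2 ^ (-(2*n)) * ‖x‖ ^ (-(2*n))) := h3.symm
      _ = (2:ℝ) ^ (2*n) * ((2*‖x‖) ^ (-(2*n))) := by rw [h2]
      _ ≤ (2:ℝ) ^ (2*n) * (1 + ‖x‖) ^ (-(2*n)) := by
          exact mul_le_mul_of_nonneg_left h1 (Real.rpow_nonneg (by norm_num) _)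
  · rw [Set.indicator_of_notMem (by exact hx)]
    simp only [norm_zero]
    positivity

lemma tail_sum_le (d : ℕ) (hd : 2 ≤ d) (n : ℝ) (hn : (d:ℝ)/2 < n) (lam : ℝ)
    (hlam : 2 * Real.sqrt d ≤ lam) :
    ∑' h : Fin d → ℤ, Set.indicator {h : Fin d → ℤ | lam ≤ znorm h}
        (fun h => ENNReal.ofReal ((1 + znorm h ^ 2) ^ (-n))) h ≤
      ENNReal.ofReal (((1:ℝ)+d)^n *
        (d * (Real.sqrt Real.pi ^ d / Real.Gamma ((d:ℝ)/2 + 1)) *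
          ((lam - Real.sqrt d) ^ ((d:ℝ) - 2*n) / (2*n - (d:ℝ))))) := by
  classical
  set s : ℝ := Real.sqrt d with hs
  have hs1 : (1:ℝ) ≤ s := by
    rw [hs, show (1:ℝ) = Real.sqrt 1 from (Real.sqrt_one).symm]
    exact Real.sqrt_le_sqrt (by exact_mod_cast Nat.one_le_of_lt hd)
  have hs2 : s ^ 2 = (d:ℝ) := Real.sq_sqrt (by positivity)
  set R : ℝ := lam - s with hR
  have hR1 : (1:ℝ) ≤ R := by rw [hR]; linarith
  have hR0 : (0:ℝ) < R := by linarith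
  set G : EuclideanSpace ℝ (Fin d) → ℝ≥0∞ := fun x =>
    ENNReal.ofReal (Set.indicator (Ici R) (fun r => r ^ (-(2*n))) ‖x‖) with hG
  have hd1 : (0:ℝ) ≤ 1 + (d:ℝ) := by positivity
  rw [← (Equiv.tsum_eq ((equivLat d).symm) (fun h => Set.indicator {h : Fin d → ℤ | lam ≤ znorm h}
        (fun h => ENNReal.ofReal ((1 + znorm h ^ 2) ^ (-n))) h))]
  have key : ∀ g : span ℤ (Set.range (bE d)),
      Set.indicator {h : Fin d → ℤ | lam ≤ znorm h}
        (fun h => ENNReal.ofReal ((1 + znorm h ^ 2) ^ (-n))) ((equivLat d).symm g) ≤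
      ENNReal.ofReal (((1:ℝ)+d)^n) *
        ∫⁻ x in ZSpan.fundamentalDomain (bE d), G (g +ᵥ x) := by
    intro g
    by_cases hg : lam ≤ znorm ((equivLat d).symm g)
    · rw [Set.indicator_of_mem (by exact hg)]
      rw [norm_equivLat_symm] at hg
      rw [norm_equivLat_symm d g]
      set ℓ : EuclideanSpace ℝ (Fin d) := (g : EuclideanSpace ℝ (Fin d)) with hℓ
      have hbound : ENNReal.ofReal (((1:ℝ)+d)^(-n) * (1 + ‖ℓ‖^2) ^ (-n)) * 1 ≤
          ∫⁻ x in ZSpan.fundamentalDomain (bE d), G (g +ᵥ x) := by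
        rw [← volume_fd d, ← setLIntegral_const]
        refine setLIntegral_mono' (ZSpan.fundamentalDomain_measurableSet (bE d)) ?_
        intro x hx
        have hxn : ‖x‖ ≤ s := norm_fd x hx
        have hgx : (g +ᵥ x : EuclideanSpace ℝ (Fin d)) = ℓ + x := rfl
        have hn1 : R ≤ ‖ℓ + x‖ := by
          have h2 := norm_sub_norm_le ℓ (-x)
          rw [norm_neg, sub_neg_eq_add] at h2
          linarith
        have hn2 : ‖ℓ + x‖^2 ≤ (1 + (d:ℝ)) * (1 + ‖ℓ‖^2) := by
          have h3 : ‖ℓ + x‖ ≤ ‖ℓ‖ + s := le_trans (norm_add_le _ _) (by linarith)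
          have h4 : 0 ≤ ‖ℓ + x‖ := norm_nonneg _
          have h5 : 2*s ≤ ‖ℓ‖ := by linarith
          nlinarith [sq_nonneg (s * ‖ℓ‖ - 1)]
        rw [hgx, hG]
        simp only
        rw [Set.indicator_of_mem (by exact hn1 : ‖ℓ + x‖ ∈ Ici R)]
        refine ENNReal.ofReal_le_ofReal ?_
        have h6 : (0:ℝ) < ‖ℓ + x‖ := by linarith
        have h7 : ‖ℓ + x‖ ^ (-(2*n)) = (‖ℓ + x‖^2) ^ (-n) := by
          rw [← Real.rpow_natCast ‖ℓ + x‖ 2, ← Real.rpow_mul h6.le]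
          norm_num
        rw [h7, ← Real.mul_rpow hd1 (by positivity)]
        exact Real.rpow_le_rpow_of_nonpos (by positivity) hn2 (by linarith)
      calc ENNReal.ofReal ((1 + ‖ℓ‖ ^ 2) ^ (-n))
          = ENNReal.ofReal (((1:ℝ)+d)^n) *
            ENNReal.ofReal (((1:ℝ)+d)^(-n) * (1 + ‖ℓ‖^2) ^ (-n)) := by
            rw [← ENNReal.ofReal_mul (by positivity), ← mul_assoc,
              ← Real.rpow_add (by positivity)]
            simp
        _ ≤ ENNReal.ofReal (((1:ℝ)+d)^n) *
            ∫⁻ x in ZSpan.fundamentalDomain (bE d), G (g +ᵥ x) := by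
            rw [show ENNReal.ofReal (((1:ℝ)+d)^(-n) * (1 + ‖ℓ‖^2) ^ (-n)) =
              ENNReal.ofReal (((1:ℝ)+d)^(-n) * (1 + ‖ℓ‖^2) ^ (-n)) * 1 from (mul_one _).symm]
            exact mul_le_mul_right hbound _
    · rw [Set.indicator_of_notMem (by exact hg)]
      exact zero_le
  refine le_trans (ENNReal.tsum_le_tsum key) ?_
  rw [ENNReal.tsum_mul_left]
  haveI : Countable (span ℤ (Set.range (bE d))) := Countable.of_equiv _ (equivLat d)
  haveI : MeasurableVAdd (span ℤ (Set.range (bE d))) (EuclideanSpace ℝ (Fin d)) := by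
    constructor
    · exact fun x => (measurable_subtype_coe.add_const x)
  haveI : VAddInvariantMeasure (span ℤ (Set.range (bE d))) (EuclideanSpace ℝ (Fin d)) volume := by
    constructor
    intro c t ht
    exact measure_preimage_add volume (c : EuclideanSpace ℝ (Fin d)) t
  have hfd := (ZSpan.isAddFundamentalDomain (bE d) volume).lintegral_eq_tsum'' G
  rw [← hfd]
  have hlin : ∫⁻ x, G x = ENNReal.ofReal
      (∫ x : EuclideanSpace ℝ (Fin d), Set.indicator (Ici R) (fun r => r ^ (-(2*n))) ‖x‖) := by
    rw [ofReal_integral_eq_lintegral_ofReal (integrable_ind d hd n hn R hR1)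
      (Filter.Eventually.of_forall fun x => Set.indicator_nonneg
        (fun r hr => Real.rpow_nonneg (by linarith [mem_Ici.mp hr]) _) _)]
  rw [hlin, integral_eval d hd n hn R hR1, ← ENNReal.ofReal_mul (by positivity)]

lemma const_div (d : ℕ) (hd : 2 ≤ d) (n : ℝ) (hn : (d:ℝ)/2 < n) (R : ℝ) (hR0 : 0 < R) :
    ((1:ℝ)+d)^n * (d * (Real.sqrt Real.pi ^ d / Real.Gamma ((d:ℝ)/2 + 1)) *
        (R ^ ((d:ℝ) - 2*n) / (2*n - (d:ℝ)))) / (2 * Real.pi) ^ d =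
      ((1:ℝ) + d) ^ n / (2 ^ (d - 1) * Real.pi ^ ((d : ℝ) / 2) * Real.Gamma ((d : ℝ) / 2) *
        (2 * n - d) * R ^ (2 * n - (d : ℝ))) := by
  have hπ := Real.pi_pos
  have hA : Real.sqrt Real.pi ^ d = Real.pi ^ ((d:ℝ)/2) := by
    rw [Real.sqrt_eq_rpow, ← Real.rpow_natCast (Real.pi ^ ((1:ℝ)/2)) d,
      ← Real.rpow_mul hπ.le]
    congr 1
    ring
  have hΓ : Real.Gamma ((d:ℝ)/2 + 1) = ((d:ℝ)/2) * Real.Gamma ((d:ℝ)/2) := by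
    rw [Real.Gamma_add_one (by positivity)]
  have hπd : (Real.pi:ℝ) ^ d = Real.pi ^ ((d:ℝ)/2) * Real.pi ^ ((d:ℝ)/2) := by
    rw [← Real.rpow_natCast Real.pi d, ← Real.rpow_add hπ]
    norm_num
  have h2d : (2:ℝ) ^ d = 2 ^ (d - 1) * 2 := by
    rw [← pow_succ]
    congr 1
    omega
  have hRe : R ^ ((d:ℝ) - 2*n) = (R ^ (2*n - (d:ℝ)))⁻¹ := by
    rw [show (d:ℝ) - 2*n = -(2*n - (d:ℝ)) by ring, Real.rpow_neg hR0.le]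
  have hΓpos : 0 < Real.Gamma ((d:ℝ)/2) := Real.Gamma_pos_of_pos (by positivity)
  have hApos : 0 < Real.pi ^ ((d:ℝ)/2) := Real.rpow_pos_of_pos hπ _
  have hRpos : 0 < R ^ (2*n - (d:ℝ)) := Real.rpow_pos_of_pos hR0 _
  have hdpos : (0:ℝ) < d := by exact_mod_cast (by omega : 0 < d)
  have hnd : 0 < 2*n - (d:ℝ) := by linarith
  rw [mul_pow, h2d, hπd, hA, hΓ, hRe]
  field_simp

end Stmt18Aux

open Stmt18Aux

/-- Finiteness and two-sided cutoff estimates for `Σ_n = (2π)^{−d} ∑_{h∈ℤ^d} (1+|h|²)^{−n}`: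
the series converges, and for every cutoff `λ ≥ 2√d` one has
`𝒮_n(λ) < Σ_n ≤ 𝒮_n(λ) + δ𝒮_n(λ)`. -/
theorem stmt_18 (d : ℕ) (hd : 2 ≤ d) (n : ℝ) (hn : (d : ℝ) / 2 < n) :
    Summable (fun h : Fin d → ℤ => (1 + znorm h ^ 2) ^ (-n)) ∧
    ∀ lam : ℝ, 2 * Real.sqrt d ≤ lam →
      (∑' h : {h : Fin d → ℤ // znorm h < lam}, (1 + znorm h.1 ^ 2) ^ (-n)) /
          (2 * Real.pi) ^ d <
        (∑' h : Fin d → ℤ, (1 + znorm h ^ 2) ^ (-n)) / (2 * Real.pi) ^ d ∧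
      (∑' h : Fin d → ℤ, (1 + znorm h ^ 2) ^ (-n)) / (2 * Real.pi) ^ d ≤
        (∑' h : {h : Fin d → ℤ // znorm h < lam}, (1 + znorm h.1 ^ 2) ^ (-n)) /
            (2 * Real.pi) ^ d +
          ((1 : ℝ) + d) ^ n /
            (2 ^ (d - 1) * Real.pi ^ ((d : ℝ) / 2) * Real.Gamma ((d : ℝ) / 2) *
              (2 * n - d) * (lam - Real.sqrt d) ^ (2 * n - (d : ℝ))) := by
  classical
  have hdr : (2:ℝ) ≤ (d:ℝ) := by exact_mod_cast hd
  set f : (Fin d → ℤ) → ℝ := fun h => (1 + znorm h ^ 2) ^ (-n) with hf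
  have hfpos : ∀ h, 0 < f h := fun h => Real.rpow_pos_of_pos (by positivity) _
  have hs1 : (1:ℝ) ≤ Real.sqrt d := by
    rw [show (1:ℝ) = Real.sqrt 1 from (Real.sqrt_one).symm]
    exact Real.sqrt_le_sqrt (by linarith)
  -- finite partial sums over any ball
  have hfin_sum : ∀ c : ℝ, (∑' h : {h : Fin d → ℤ | znorm h < c},
      ENNReal.ofReal (f h.1)) ≠ ⊤ := by
    intro c
    haveI := (znorm_finite (d := d) c).fintype
    rw [tsum_fintype]
    exact (ENNReal.sum_lt_top.mpr fun a _ => ENNReal.ofReal_lt_top).ne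
  have hcompl : ∀ c : ℝ, ({h : Fin d → ℤ | znorm h < c})ᶜ = {h : Fin d → ℤ | c ≤ znorm h} := by
    intro c
    ext h
    simp [not_lt]
  -- total sum finite
  have htop : (∑' h : Fin d → ℤ, ENNReal.ofReal (f h)) ≠ ⊤ := by
    set s : Set (Fin d → ℤ) := {h | znorm h < 2 * Real.sqrt d} with hsdef
    have h1 : (∑' h : Fin d → ℤ, ENNReal.ofReal (f h)) =
        (∑' h : Fin d → ℤ, Set.indicator s (fun h => ENNReal.ofReal (f h)) h) +
        (∑' h : Fin d → ℤ, Set.indicator sᶜ (fun h => ENNReal.ofReal (f h)) h) := by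
      rw [← ENNReal.tsum_add]
      refine tsum_congr fun h => ?_
      exact (congrFun (Set.indicator_self_add_compl s
        (fun h => ENNReal.ofReal (f h))) h).symm
    rw [h1]
    refine ENNReal.add_ne_top.mpr ⟨?_, ?_⟩
    · rw [← tsum_subtype]
      exact hfin_sum _
    · have hle : (∑' h : Fin d → ℤ, Set.indicator sᶜ (fun h => ENNReal.ofReal (f h)) h) ≤
          ENNReal.ofReal (((1:ℝ)+d)^n *
            ((d:ℝ) * (Real.sqrt Real.pi ^ d / Real.Gamma ((d:ℝ)/2 + 1)) *
              ((2 * Real.sqrt d - Real.sqrt d) ^ ((d:ℝ) - 2*n) / (2*n - (d:ℝ))))) := by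
        rw [hsdef, hcompl]
        exact tail_sum_le d hd n hn (2 * Real.sqrt d) le_rfl
      exact ne_top_of_le_ne_top ENNReal.ofReal_ne_top hle
  have hsum : Summable f := by
    have h1 : Summable (fun h => (f h).toNNReal) :=
      ENNReal.tsum_coe_ne_top_iff_summable.mp (by exact htop)
    have h2 : (fun h => ((f h).toNNReal : ℝ)) = f :=
      funext fun h => Real.coe_toNNReal _ (hfpos h).le
    exact h2 ▸ (NNReal.summable_coe.mpr h1)
  refine ⟨hsum, fun lam hlam => ?_⟩
  have hR0 : (0:ℝ) < lam - Real.sqrt d := by linarith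
  set s : Set (Fin d → ℤ) := {h | znorm h < lam} with hsdef
  have hsub1 : Summable (f ∘ (Subtype.val : s → (Fin d → ℤ))) := hsum.subtype _
  have hsub2 : Summable (f ∘ (Subtype.val : ↥sᶜ → (Fin d → ℤ))) := hsum.subtype _
  have hsplit : (∑' x : s, f x.1) + (∑' x : ↥sᶜ, f x.1) = ∑' h, f h :=
    Summable.tsum_add_tsum_compl hsub1 hsub2
  -- the tail is positive
  have htailpos : 0 < ∑' x : ↥sᶜ, f x.1 := by
    refine Summable.tsum_pos hsub2 (fun x => (hfpos _).le) ?_ (hfpos _)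
    refine ⟨fun _ => ((⌈lam⌉₊ : ℤ)), ?_⟩
    have hc : lam ≤ ((⌈lam⌉₊ : ℤ) : ℝ) := by
      push_cast
      exact Nat.le_ceil lam
    have hznorm : lam ≤ znorm (fun _ : Fin d => ((⌈lam⌉₊ : ℤ))) := by
      rw [znorm]
      have hcnn : (0:ℝ) ≤ ((⌈lam⌉₊ : ℤ) : ℝ) := by positivity
      calc lam ≤ ((⌈lam⌉₊ : ℤ) : ℝ) := hc
        _ = Real.sqrt ((((⌈lam⌉₊ : ℤ) : ℝ))^2) := (Real.sqrt_sq hcnn).symm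
        _ ≤ Real.sqrt (∑ _i : Fin d, (((⌈lam⌉₊ : ℤ) : ℝ))^2) := by
            refine Real.sqrt_le_sqrt ?_
            rw [Finset.sum_const, Finset.card_univ, Fintype.card_fin, nsmul_eq_mul]
            nlinarith [sq_nonneg (((⌈lam⌉₊ : ℤ) : ℝ))]
    simp only [hsdef, Set.mem_compl_iff, Set.mem_setOf_eq, not_lt]
    exact hznorm
  -- the tail bound
  set Cst : ℝ := ((1:ℝ)+d)^n *
      (d * (Real.sqrt Real.pi ^ d / Real.Gamma ((d:ℝ)/2 + 1)) *
        ((lam - Real.sqrt d) ^ ((d:ℝ) - 2*n) / (2*n - (d:ℝ)))) with hCst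
  have hCnn : 0 ≤ Cst := by
    rw [hCst]
    have hΓpos : 0 < Real.Gamma ((d:ℝ)/2 + 1) := Real.Gamma_pos_of_pos (by positivity)
    have h1 : 0 < ((1:ℝ)+d)^n := Real.rpow_pos_of_pos (by positivity) _
    have h2 : 0 < (lam - Real.sqrt d) ^ ((d:ℝ) - 2*n) := Real.rpow_pos_of_pos hR0 _
    have h3 : 0 < 2*n - (d:ℝ) := by linarith
    positivity
  have htail_le : (∑' x : ↥sᶜ, f x.1) ≤ Cst := by
    rw [← ENNReal.ofReal_le_ofReal_iff hCnn]
    rw [ENNReal.ofReal_tsum_of_nonneg (fun x => (hfpos _).le) hsub2]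
    have h2 : (∑' x : ↥sᶜ, ENNReal.ofReal (f x.1)) =
        ∑' h, Set.indicator sᶜ (fun h => ENNReal.ofReal (f h)) h :=
      tsum_subtype sᶜ (fun h => ENNReal.ofReal (f h))
    rw [h2, hsdef, hcompl]
    exact tail_sum_le d hd n hn lam hlam
  have hC2π : (0:ℝ) < (2 * Real.pi) ^ d := by positivity
  constructor
  · have hlt : (∑' x : s, f x.1) < ∑' h, f h := by
      rw [← hsplit]
      exact lt_add_of_pos_right _ htailpos
    exact div_lt_div_of_pos_right hlt hC2π
  · rw [← hsplit, add_div]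
    refine add_le_add (le_refl _) ?_
    calc (∑' x : ↥sᶜ, f x.1) / (2 * Real.pi) ^ d
        ≤ Cst / (2 * Real.pi) ^ d := by
          exact div_le_div_of_nonneg_right htail_le hC2π.le
      _ = ((1:ℝ) + d) ^ n / (2 ^ (d - 1) * Real.pi ^ ((d : ℝ) / 2) *
            Real.Gamma ((d : ℝ) / 2) * (2 * n - d) *
            (lam - Real.sqrt d) ^ (2 * n - (d : ℝ))) :=
          const_div d hd n hn (lam - Real.sqrt d) hR0
end

section
/- Let d ≥ 2 be an integer and n > d/2 a real number, and for k ∈ ℤ^d define 𝒦_n(k) := ((1+|k|²)^{n−1}/(2π)^d) ∑_{h∈ℤ^d} |k−h|² / ((1+|h|²)^n (1+|k−h|²)^n). Then: (i) 𝒦_n(k) < ∞ for every k ∈ ℤ^d; (ii) 𝒦_n(k) → Σ_n as |k| → ∞, where Σ_n := (2π)^{−d} ∑_{h∈ℤ^d} (1+|h|²)^{−n}; and consequently (iii) sup_{k∈ℤ^d} 𝒦_n(k) < ∞. -/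
open Set

namespace Stmt19

open Filter

variable {d : ℕ}

noncomputable def zc {d : ℕ} (h : Fin d → ℤ) : EuclideanSpace ℝ (Fin d) := WithLp.toLp 2 (fun i => (h i : ℝ))

lemma znorm_eq (h : Fin d → ℤ) : znorm h = ‖zc h‖ := by
  rw [EuclideanSpace.norm_eq]
  unfold znorm
  congr 1
  exact Finset.sum_congr rfl fun i _ => by rw [Real.norm_eq_abs, sq_abs]; rfl

lemma znorm_nonneg (h : Fin d → ℤ) : 0 ≤ znorm h := Real.sqrt_nonneg _

lemma zc_sub (k h : Fin d → ℤ) : zc (k - h) = zc k - zc h := by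
  ext i
  simp [zc]

lemma znorm_sq (h : Fin d → ℤ) : znorm h ^ 2 = ∑ i, ((h i : ℝ)) ^ 2 :=
  Real.sq_sqrt (Finset.sum_nonneg fun i _ => sq_nonneg _)

lemma w_pos (h : Fin d → ℤ) : (0:ℝ) < 1 + znorm h ^ 2 := by positivity

lemma w_one (h : Fin d → ℤ) : (1:ℝ) ≤ 1 + znorm h ^ 2 := by
  nlinarith [sq_nonneg (znorm h)]

lemma znorm_sub_le (k h : Fin d → ℤ) : znorm k ≤ znorm h + znorm (k - h) := by
  rw [znorm_eq, znorm_eq, znorm_eq, zc_sub]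
  simpa using norm_add_le (zc h) (zc k - zc h)

lemma abs_znorm_sub (k h : Fin d → ℤ) : |znorm k - znorm (k - h)| ≤ znorm h := by
  rw [znorm_eq, znorm_eq, znorm_eq, zc_sub]
  simpa using abs_norm_sub_norm_le (zc k) (zc k - zc h)

lemma wb {k m : Fin d → ℤ} (hkm : znorm k ≤ 2 * znorm m) :
    1 + znorm k ^ 2 ≤ 4 * (1 + znorm m ^ 2) := by
  nlinarith [znorm_nonneg k, znorm_nonneg m]

/-! ### Summability -/

lemma summable_int_one (q : ℝ) (hq : 1/2 < q) :
    Summable (fun m : ℤ => (1 + (m:ℝ)^2) ^ (-q)) := by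
  have key : Summable (fun n : ℕ => (1 + (n:ℝ)^2) ^ (-q)) := by
    have h1 : Summable (fun n : ℕ => ((n:ℝ)+1) ^ (-(2*q))) := by
      have := Real.summable_nat_rpow.2 (show -(2*q) < -1 by linarith)
      have h2 := (summable_nat_add_iff (f := fun n : ℕ => (n:ℝ) ^ (-(2*q))) 1).2 this
      refine h2.congr fun n => ?_
      push_cast
      rfl
    rw [← summable_nat_add_iff 1]
    refine h1.of_nonneg_of_le (fun n => by positivity) fun n => ?_
    have hb : (0:ℝ) < ((n:ℝ)+1)^2 := by positivity
    calc (1 + ((n:ℕ)+1:ℕ)^2 : ℝ) ^ (-q) ≤ (((n:ℝ)+1)^2) ^ (-q) := by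
          apply Real.rpow_le_rpow_of_nonpos hb (by push_cast; nlinarith) (by linarith)
      _ = ((n:ℝ)+1) ^ (-(2*q)) := by
          rw [← Real.rpow_natCast ((n:ℝ)+1) 2, ← Real.rpow_mul (by positivity)]
          norm_num
  apply Summable.of_nat_of_neg
  · exact key
  · refine key.congr fun n => ?_
    push_cast
    ring_nf

lemma summable_pi {m : ℕ} {f : ℤ → ℝ} (h0 : ∀ x, 0 ≤ f x) (hf : Summable f) :
    Summable (fun h : Fin m → ℤ => ∏ i, f (h i)) := by
  induction m with
  | zero => exact Summable.of_finite
  | succ m ih =>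
    have hm := hf.mul_of_nonneg ih (fun _ => h0 _)
      (fun g => Finset.prod_nonneg fun _ _ => h0 _)
    apply ((Fin.consEquiv fun _ : Fin (m+1) => ℤ).summable_iff).mp
    refine hm.congr fun p => ?_
    show f p.1 * ∏ i, f (p.2 i) = ∏ i, f ((Fin.cons p.1 p.2 : Fin (m+1) → ℤ) i)
    rw [Fin.prod_univ_succ]
    simp

lemma summable_main (hd : 0 < d) {p : ℝ} (hp : (d:ℝ) < 2*p) :
    Summable (fun h : Fin d → ℤ => (1 + znorm h ^ 2) ^ (-p)) := by
  have hd' : (0:ℝ) < d := by exact_mod_cast hd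
  have hq : 1/2 < p/d := by rw [div_lt_div_iff₀ (by norm_num) hd']; linarith
  have base := summable_int_one (p/d) hq
  have prod := summable_pi (m := d) (f := fun m : ℤ => (1 + (m:ℝ)^2) ^ (-(p/d)))
    (fun x => by positivity) base
  refine prod.of_nonneg_of_le (fun h => by positivity) fun h => ?_
  rw [znorm_sq]
  set S := ∑ i, ((h i : ℝ))^2 with hS
  have hS0 : 0 ≤ S := Finset.sum_nonneg fun i _ => sq_nonneg _
  have hP0 : (0:ℝ) < ∏ i, (1 + ((h i : ℝ))^2) :=
    Finset.prod_pos fun i _ => by positivity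
  have h1 : ∏ i, (1 + ((h i : ℝ))^2) ≤ (1+S) ^ (d:ℕ) := by
    calc ∏ i, (1 + ((h i : ℝ))^2) ≤ ∏ _i : Fin d, (1 + S) := by
          refine Finset.prod_le_prod (fun i _ => by positivity) (fun i _ => ?_)
          have : ((h i : ℝ))^2 ≤ S :=
            Finset.single_le_sum (fun j _ => sq_nonneg ((h j : ℝ))) (Finset.mem_univ i)
          linarith
      _ = (1+S)^(d:ℕ) := by simp
  calc (1 + S) ^ (-p) = ((1+S) ^ (d:ℕ)) ^ (-(p/d)) := by
        rw [← Real.rpow_natCast (1+S) d, ← Real.rpow_mul (by linarith)]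
        congr 1
        field_simp
    _ ≤ (∏ i, (1 + ((h i : ℝ))^2)) ^ (-(p/d)) := by
        apply Real.rpow_le_rpow_of_nonpos hP0 h1
        rw [neg_nonpos]
        positivity
    _ = ∏ i, ((1 + ((h i : ℝ))^2) ^ (-(p/d))) := by
        rw [← Real.finset_prod_rpow _ _ (fun i _ => by positivity)]

lemma summable_shift {f : (Fin d → ℤ) → ℝ} (hf : Summable f) (k : Fin d → ℤ) :
    Summable (fun h => f (k - h)) :=
  ((Equiv.subLeft k).summable_iff).2 hf

lemma tsum_shift (f : (Fin d → ℤ) → ℝ) (k : Fin d → ℤ) :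
    ∑' h, f (k - h) = ∑' h, f h :=
  (Equiv.subLeft k).tsum_eq f

/-! ### Cofinite limits -/

lemma tendsto_znorm : Tendsto (znorm (d := d)) cofinite atTop := by
  rw [Filter.tendsto_atTop]
  intro R
  rw [Filter.eventually_cofinite]
  apply Set.Finite.subset (Set.Finite.pi fun _ : Fin d => Set.finite_Icc (-⌈R⌉) ⌈R⌉)
  intro k hk
  simp only [Set.mem_setOf_eq, not_le] at hk
  have hR0 : 0 < R := lt_of_le_of_lt (znorm_nonneg k) hk
  have hRC : R ≤ (⌈R⌉ : ℝ) := Int.le_ceil R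
  intro i _
  have h1 : ((k i : ℝ))^2 ≤ znorm k ^ 2 := by
    rw [znorm_sq]
    exact Finset.single_le_sum (fun j _ => sq_nonneg ((k j : ℝ))) (Finset.mem_univ i)
  have h2 : ((k i : ℝ))^2 < ((⌈R⌉:ℝ))^2 := by nlinarith [znorm_nonneg k]
  have h3 : -((⌈R⌉:ℝ)) ≤ (k i : ℝ) ∧ (k i : ℝ) ≤ (⌈R⌉:ℝ) := by
    constructor <;> nlinarith
  constructor
  · exact_mod_cast h3.1
  · exact_mod_cast h3.2

lemma tendsto_znorm_sub (h : Fin d → ℤ) :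
    Tendsto (fun k : Fin d → ℤ => znorm (k - h)) cofinite atTop := by
  apply tendsto_atTop_mono (fun k => ?_)
    (tendsto_atTop_add_const_right _ (-znorm h) tendsto_znorm)
  have := znorm_sub_le k h
  linarith

lemma tendsto_w_sub (h : Fin d → ℤ) :
    Tendsto (fun k : Fin d → ℤ => 1 + znorm (k - h) ^ 2) cofinite atTop :=
  tendsto_atTop_add_const_left _ 1
    ((tendsto_pow_atTop two_ne_zero).comp (tendsto_znorm_sub h))

lemma tendsto_w : Tendsto (fun k : Fin d → ℤ => 1 + znorm k ^ 2) cofinite atTop :=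
  tendsto_atTop_add_const_left _ 1
    ((tendsto_pow_atTop two_ne_zero).comp tendsto_znorm)

end Stmt19

namespace Stmt19
open Filter
variable {d : ℕ} {n : ℝ}

lemma tm_le (hn1 : 1 ≤ n) (k h : Fin d → ℤ) :
    znorm (k - h) ^ 2 / ((1 + znorm h ^ 2) ^ n * (1 + znorm (k - h) ^ 2) ^ n)
      ≤ (1 + znorm h ^ 2) ^ (-n) := by
  have hP := w_pos h
  have hV := w_pos (k - h)
  have hPn : (0:ℝ) < (1 + znorm h ^ 2) ^ n := Real.rpow_pos_of_pos hP n
  have hVn : (0:ℝ) < (1 + znorm (k-h) ^ 2) ^ n := Real.rpow_pos_of_pos hV n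
  have h1 : znorm (k - h) ^ 2 ≤ (1 + znorm (k-h) ^ 2) ^ n := by
    calc znorm (k - h) ^ 2 ≤ (1 + znorm (k-h) ^ 2) ^ (1:ℝ) := by
          rw [Real.rpow_one]; linarith
      _ ≤ (1 + znorm (k-h) ^ 2) ^ n :=
          Real.rpow_le_rpow_of_exponent_le (w_one _) hn1
  calc znorm (k - h) ^ 2 / ((1 + znorm h ^ 2) ^ n * (1 + znorm (k - h) ^ 2) ^ n)
      ≤ (1 + znorm (k-h) ^ 2) ^ n / ((1 + znorm h ^ 2) ^ n * (1 + znorm (k - h) ^ 2) ^ n) := by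
        gcongr
    _ = (1 + znorm h ^ 2) ^ (-n) := by
        rw [Real.rpow_neg hP.le]
        field_simp

lemma rpow_mul_self (x : ℝ) (hx : 0 < x) : x ^ (n-1) * x = x ^ n := by
  have h := Real.rpow_add hx (n-1) 1
  rw [Real.rpow_one] at h
  rw [← h]
  norm_num

lemma gA_le (hn1 : 1 ≤ n) {k h : Fin d → ℤ} (H : znorm h ≤ znorm (k - h)) :
    (1 + znorm k ^ 2) ^ (n-1) *
      (znorm (k - h) ^ 2 / ((1 + znorm h ^ 2) ^ n * (1 + znorm (k - h) ^ 2) ^ n))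
      ≤ (4:ℝ) ^ (n-1) * (1 + znorm h ^ 2) ^ (-n) := by
  have hP := w_pos h
  have hV := w_pos (k - h)
  have hPn : (0:ℝ) < (1 + znorm h ^ 2) ^ n := Real.rpow_pos_of_pos hP n
  have hVn : (0:ℝ) < (1 + znorm (k-h) ^ 2) ^ n := Real.rpow_pos_of_pos hV n
  have hwk : 1 + znorm k ^ 2 ≤ 4 * (1 + znorm (k-h) ^ 2) := by
    apply wb
    have := znorm_sub_le k h
    linarith
  have h1 : (1 + znorm k ^ 2) ^ (n-1) ≤ (4:ℝ)^(n-1) * (1 + znorm (k-h) ^ 2) ^ (n-1) := by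
    calc (1 + znorm k ^ 2) ^ (n-1) ≤ (4 * (1 + znorm (k-h) ^ 2)) ^ (n-1) :=
          Real.rpow_le_rpow (w_pos k).le hwk (by linarith)
      _ = (4:ℝ)^(n-1) * (1 + znorm (k-h) ^ 2) ^ (n-1) :=
          Real.mul_rpow (by norm_num) hV.le
  have h2 : znorm (k - h) ^ 2 ≤ 1 + znorm (k-h) ^ 2 := by linarith
  calc (1 + znorm k ^ 2) ^ (n-1) *
        (znorm (k - h) ^ 2 / ((1 + znorm h ^ 2) ^ n * (1 + znorm (k - h) ^ 2) ^ n))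
      ≤ ((4:ℝ)^(n-1) * (1 + znorm (k-h) ^ 2) ^ (n-1)) *
        ((1 + znorm (k-h) ^ 2) / ((1 + znorm h ^ 2) ^ n * (1 + znorm (k - h) ^ 2) ^ n)) := by
        gcongr
    _ = (4:ℝ) ^ (n-1) * (1 + znorm h ^ 2) ^ (-n) := by
        rw [Real.rpow_neg hP.le]
        rw [show ((4:ℝ)^(n-1) * (1 + znorm (k-h) ^ 2) ^ (n-1)) *
          ((1 + znorm (k-h) ^ 2) / ((1 + znorm h ^ 2) ^ n * (1 + znorm (k - h) ^ 2) ^ n)) =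
          (4:ℝ)^(n-1) * (((1 + znorm (k-h) ^ 2) ^ (n-1) * (1 + znorm (k-h) ^ 2)) /
            ((1 + znorm h ^ 2) ^ n * (1 + znorm (k - h) ^ 2) ^ n)) by ring]
        rw [rpow_mul_self _ hV]
        congr 1
        field_simp

lemma gB_le (hn1 : 1 ≤ n) {ε : ℝ} (hε0 : 0 < ε) (hε1 : ε ≤ 1)
    {k h : Fin d → ℤ} (H : znorm (k - h) ≤ znorm h) :
    (1 + znorm k ^ 2) ^ (n-1) *
      (znorm (k - h) ^ 2 / ((1 + znorm h ^ 2) ^ n * (1 + znorm (k - h) ^ 2) ^ n))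
      ≤ (4:ℝ) ^ (n-1+ε) * (1 + znorm k ^ 2) ^ (-ε) *
        ((1 + znorm h ^ 2) ^ (-(1-ε)) * (1 + znorm (k - h) ^ 2) ^ (-(n-1))) := by
  have hP := w_pos h
  have hV := w_pos (k - h)
  have hU := w_pos k
  have hwk : 1 + znorm k ^ 2 ≤ 4 * (1 + znorm h ^ 2) := by
    apply wb
    have := znorm_sub_le k h
    linarith
  -- step 1 : lhs ≤ 4^(n-1) * P^(-1) * V^(-(n-1))
  have step1 : (1 + znorm k ^ 2) ^ (n-1) *
      (znorm (k - h) ^ 2 / ((1 + znorm h ^ 2) ^ n * (1 + znorm (k - h) ^ 2) ^ n))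
      ≤ (4:ℝ) ^ (n-1) * ((1 + znorm h ^ 2) ^ (-(1:ℝ)) * (1 + znorm (k - h) ^ 2) ^ (-(n-1))) := by
    have h1 : (1 + znorm k ^ 2) ^ (n-1) ≤ (4:ℝ)^(n-1) * (1 + znorm h ^ 2) ^ (n-1) := by
      calc (1 + znorm k ^ 2) ^ (n-1) ≤ (4 * (1 + znorm h ^ 2)) ^ (n-1) :=
            Real.rpow_le_rpow hU.le hwk (by linarith)
        _ = (4:ℝ)^(n-1) * (1 + znorm h ^ 2) ^ (n-1) := Real.mul_rpow (by norm_num) hP.le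
    have h2 : znorm (k - h) ^ 2 ≤ 1 + znorm (k-h) ^ 2 := by linarith
    calc (1 + znorm k ^ 2) ^ (n-1) *
        (znorm (k - h) ^ 2 / ((1 + znorm h ^ 2) ^ n * (1 + znorm (k - h) ^ 2) ^ n))
        ≤ ((4:ℝ)^(n-1) * (1 + znorm h ^ 2) ^ (n-1)) *
          ((1 + znorm (k-h) ^ 2) / ((1 + znorm h ^ 2) ^ n * (1 + znorm (k - h) ^ 2) ^ n)) := by
          gcongr
      _ = (4:ℝ) ^ (n-1) * ((1 + znorm h ^ 2) ^ (-(1:ℝ)) * (1 + znorm (k - h) ^ 2) ^ (-(n-1))) := by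
          rw [Real.rpow_neg hP.le, Real.rpow_neg hV.le, Real.rpow_one]
          have e1 : (1 + znorm h ^ 2) ^ (n-1) * (1 + znorm h ^ 2) = (1 + znorm h ^ 2) ^ n :=
            rpow_mul_self _ hP
          have e2 : (1 + znorm (k-h) ^ 2) ^ (n-1) * (1 + znorm (k-h) ^ 2)
              = (1 + znorm (k-h) ^ 2) ^ n := rpow_mul_self _ hV
          have hPn1 : (0:ℝ) < (1 + znorm h ^ 2) ^ (n-1) := Real.rpow_pos_of_pos hP _
          have hVn1 : (0:ℝ) < (1 + znorm (k-h) ^ 2) ^ (n-1) := Real.rpow_pos_of_pos hV _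
          rw [← e1, ← e2]
          field_simp
  -- step 2 : P^(-1) ≤ 4^ε * U^(-ε) * P^(-(1-ε))
  have step2 : (1 + znorm h ^ 2) ^ (-(1:ℝ)) ≤
      (4:ℝ)^ε * (1 + znorm k ^ 2) ^ (-ε) * (1 + znorm h ^ 2) ^ (-(1-ε)) := by
    have e3 : (1 + znorm h ^ 2) ^ (-(1:ℝ)) =
        (1 + znorm h ^ 2) ^ (-ε) * (1 + znorm h ^ 2) ^ (-(1-ε)) := by
      rw [← Real.rpow_add hP]
      congr 1
      ring
    rw [e3]
    have h4 : (1 + znorm h ^ 2) ^ (-ε) ≤ (4:ℝ)^ε * (1 + znorm k ^ 2) ^ (-ε) := by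
      have h5 : (1 + znorm k ^ 2) / 4 ≤ 1 + znorm h ^ 2 := by linarith
      calc (1 + znorm h ^ 2) ^ (-ε) ≤ ((1 + znorm k ^ 2) / 4) ^ (-ε) :=
            Real.rpow_le_rpow_of_nonpos (by positivity) h5 (by linarith)
        _ = (4:ℝ)^ε * (1 + znorm k ^ 2) ^ (-ε) := by
            rw [Real.div_rpow hU.le (by norm_num : (0:ℝ) ≤ 4),
              Real.rpow_neg (by norm_num : (0:ℝ) ≤ 4) ε]
            field_simp
    calc (1 + znorm h ^ 2) ^ (-ε) * (1 + znorm h ^ 2) ^ (-(1-ε))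
        ≤ ((4:ℝ)^ε * (1 + znorm k ^ 2) ^ (-ε)) * (1 + znorm h ^ 2) ^ (-(1-ε)) := by
          gcongr
      _ = (4:ℝ)^ε * (1 + znorm k ^ 2) ^ (-ε) * (1 + znorm h ^ 2) ^ (-(1-ε)) := by ring
  calc (1 + znorm k ^ 2) ^ (n-1) *
      (znorm (k - h) ^ 2 / ((1 + znorm h ^ 2) ^ n * (1 + znorm (k - h) ^ 2) ^ n))
      ≤ (4:ℝ) ^ (n-1) * ((1 + znorm h ^ 2) ^ (-(1:ℝ)) * (1 + znorm (k - h) ^ 2) ^ (-(n-1))) :=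
        step1
    _ ≤ (4:ℝ) ^ (n-1) * (((4:ℝ)^ε * (1 + znorm k ^ 2) ^ (-ε) * (1 + znorm h ^ 2) ^ (-(1-ε))) *
        (1 + znorm (k - h) ^ 2) ^ (-(n-1))) := by
        gcongr
    _ = (4:ℝ) ^ (n-1+ε) * (1 + znorm k ^ 2) ^ (-ε) *
        ((1 + znorm h ^ 2) ^ (-(1-ε)) * (1 + znorm (k - h) ^ 2) ^ (-(n-1))) := by
        rw [Real.rpow_add (by norm_num : (0:ℝ) < 4)]
        ring

lemma conv_le {a b : ℝ} (ha : 0 ≤ a) (hb : 0 ≤ b) (k h : Fin d → ℤ) :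
    (1 + znorm h ^ 2) ^ (-a) * (1 + znorm (k - h) ^ 2) ^ (-b)
      ≤ (1 + znorm h ^ 2) ^ (-(a+b)) + (1 + znorm (k - h) ^ 2) ^ (-(a+b)) := by
  have hP := w_pos h
  have hV := w_pos (k - h)
  rcases le_total (1 + znorm h ^ 2) (1 + znorm (k - h) ^ 2) with H | H
  · have h1 : (1 + znorm (k-h) ^ 2) ^ (-b) ≤ (1 + znorm h ^ 2) ^ (-b) :=
      Real.rpow_le_rpow_of_nonpos hP H (neg_nonpos.2 hb)
    calc (1 + znorm h ^ 2) ^ (-a) * (1 + znorm (k - h) ^ 2) ^ (-b)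
        ≤ (1 + znorm h ^ 2) ^ (-a) * (1 + znorm h ^ 2) ^ (-b) := by
          gcongr
      _ = (1 + znorm h ^ 2) ^ (-(a+b)) := by rw [← Real.rpow_add hP]; ring_nf
      _ ≤ _ := le_add_of_nonneg_right (Real.rpow_pos_of_pos hV _).le
  · have h1 : (1 + znorm h ^ 2) ^ (-a) ≤ (1 + znorm (k-h) ^ 2) ^ (-a) :=
      Real.rpow_le_rpow_of_nonpos hV H (neg_nonpos.2 ha)
    calc (1 + znorm h ^ 2) ^ (-a) * (1 + znorm (k - h) ^ 2) ^ (-b)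
        ≤ (1 + znorm (k-h) ^ 2) ^ (-a) * (1 + znorm (k-h) ^ 2) ^ (-b) := by
          gcongr
      _ = (1 + znorm (k-h) ^ 2) ^ (-(a+b)) := by rw [← Real.rpow_add hV]; ring_nf
      _ ≤ _ := le_add_of_nonneg_left (Real.rpow_pos_of_pos hP _).le

lemma ratio_tendsto (h : Fin d → ℤ) :
    Tendsto (fun k : Fin d → ℤ => (1 + znorm k ^ 2) / (1 + znorm (k - h) ^ 2))
      cofinite (nhds 1) := by
  have hU := tendsto_znorm_sub h
  have h0 : Tendsto (fun k : Fin d → ℤ =>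
      (1 + znorm k ^ 2) / (1 + znorm (k - h) ^ 2) - 1) cofinite (nhds 0) := by
    apply squeeze_zero_norm' (a := fun k =>
      (2 * znorm h + znorm h ^ 2) / znorm (k - h))
    · filter_upwards [hU.eventually_ge_atTop 1] with k hk
      have habs : |znorm k - znorm (k - h)| ≤ znorm h := abs_znorm_sub k h
      have hkv : znorm k ≤ znorm h + znorm (k - h) := znorm_sub_le k h
      have hv2 : (0:ℝ) < 1 + znorm (k-h) ^ 2 := w_pos _
      have hv0 : (0:ℝ) < znorm (k - h) := by linarith
      have e : (1 + znorm k ^ 2) / (1 + znorm (k-h) ^ 2) - 1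
          = (znorm k ^ 2 - znorm (k-h) ^ 2) / (1 + znorm (k-h) ^ 2) := by
        field_simp
        ring
      rw [e, Real.norm_eq_abs, abs_div, abs_of_pos hv2]
      rw [div_le_div_iff₀ hv2 hv0]
      have h2 : |znorm k ^ 2 - znorm (k-h) ^ 2| ≤ znorm h * (2 * znorm (k-h) + znorm h) := by
        have e2 : znorm k ^ 2 - znorm (k-h) ^ 2
            = (znorm k - znorm (k-h)) * (znorm k + znorm (k-h)) := by ring
        rw [e2, abs_mul]
        have h3 : |znorm k + znorm (k-h)| ≤ 2 * znorm (k-h) + znorm h := by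
          rw [abs_of_nonneg (add_nonneg (znorm_nonneg k) (znorm_nonneg _))]
          linarith
        exact mul_le_mul habs h3 (abs_nonneg _) (znorm_nonneg h)
      have h4 := mul_le_mul_of_nonneg_right h2 hv0.le
      have h5 : 0 ≤ znorm h ^ 2 * (znorm (k-h) * (znorm (k-h) - 1)) :=
        mul_nonneg (sq_nonneg _) (mul_nonneg hv0.le (by linarith))
      nlinarith [znorm_nonneg h, sq_nonneg (znorm (k-h))]
    · exact Tendsto.div_atTop tendsto_const_nhds hU
  have h1 := h0.add_const 1
  norm_num at h1
  exact h1

lemma g_tendsto (hn1 : 1 ≤ n) (h : Fin d → ℤ) :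
    Tendsto (fun k : Fin d → ℤ => (1 + znorm k ^ 2) ^ (n-1) *
        (znorm (k - h) ^ 2 / ((1 + znorm h ^ 2) ^ n * (1 + znorm (k - h) ^ 2) ^ n)))
      cofinite (nhds ((1 + znorm h ^ 2) ^ (-n))) := by
  have hP := w_pos h
  -- factor 1
  have hf1 : Tendsto (fun k : Fin d → ℤ =>
      ((1 + znorm k ^ 2) / (1 + znorm (k - h) ^ 2)) ^ (n-1)) cofinite (nhds 1) := by
    have := (ratio_tendsto h).rpow_const (p := n - 1) (Or.inl one_ne_zero)
    rwa [Real.one_rpow] at this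
  -- factor 2
  have hf2 : Tendsto (fun k : Fin d → ℤ =>
      znorm (k - h) ^ 2 / (1 + znorm (k - h) ^ 2)) cofinite (nhds 1) := by
    have hW := tendsto_w_sub h
    have h2 : Tendsto (fun k : Fin d → ℤ =>
        1 - (1 + znorm (k - h) ^ 2)⁻¹) cofinite (nhds (1 - 0)) :=
      tendsto_const_nhds.sub hW.inv_tendsto_atTop
    rw [sub_zero] at h2
    refine h2.congr fun k => ?_
    have := w_pos (k - h)
    field_simp
    ring
  have hmul : Tendsto (fun k : Fin d → ℤ =>
      (1 + znorm h ^ 2) ^ (-n) *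
        (((1 + znorm k ^ 2) / (1 + znorm (k - h) ^ 2)) ^ (n-1) *
          (znorm (k - h) ^ 2 / (1 + znorm (k - h) ^ 2))))
      cofinite (nhds ((1 + znorm h ^ 2) ^ (-n) * (1 * 1))) :=
    tendsto_const_nhds.mul (hf1.mul hf2)
  rw [mul_one, mul_one] at hmul
  refine hmul.congr fun k => ?_
  -- algebraic identity
  have hU := w_pos k
  have hV := w_pos (k - h)
  have hPn : (0:ℝ) < (1 + znorm h ^ 2) ^ n := Real.rpow_pos_of_pos hP n
  have hVn1 : (0:ℝ) < (1 + znorm (k-h) ^ 2) ^ (n-1) := Real.rpow_pos_of_pos hV _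
  rw [Real.div_rpow hU.le hV.le, Real.rpow_neg hP.le]
  have e2 : (1 + znorm (k-h) ^ 2) ^ n = (1 + znorm (k-h) ^ 2) ^ (n-1) * (1 + znorm (k-h) ^ 2) :=
    (rpow_mul_self _ hV).symm
  rw [e2]
  field_simp

lemma tendsto_sum_g (hd : 0 < d) (hn1 : 1 ≤ n) (hn2 : (d:ℝ) < 2*n) :
    Tendsto (fun k : Fin d → ℤ => ∑' h : Fin d → ℤ,
      (1 + znorm k ^ 2) ^ (n-1) *
        (znorm (k - h) ^ 2 / ((1 + znorm h ^ 2) ^ n * (1 + znorm (k - h) ^ 2) ^ n)))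
      cofinite (nhds (∑' h : Fin d → ℤ, (1 + znorm h ^ 2) ^ (-n))) := by
  classical
  have hd2 : (0:ℝ) < d := by exact_mod_cast hd
  set ε : ℝ := min 1 ((n - d/2)/2) with hεdef
  have hε0 : 0 < ε := lt_min one_pos (by linarith)
  have hε1 : ε ≤ 1 := min_le_left _ _
  have hεn : (d:ℝ) < 2*(n - ε) := by
    have h1 : ε ≤ (n - d/2)/2 := min_le_right _ _
    linarith
  set g : (Fin d → ℤ) → (Fin d → ℤ) → ℝ := fun k h => (1 + znorm k ^ 2) ^ (n-1) *
    (znorm (k - h) ^ 2 / ((1 + znorm h ^ 2) ^ n * (1 + znorm (k - h) ^ 2) ^ n)) with hgdef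
  set A : (Fin d → ℤ) → (Fin d → ℤ) → ℝ :=
    fun k h => if znorm h ≤ znorm (k - h) then g k h else 0 with hAdef
  set B : (Fin d → ℤ) → (Fin d → ℤ) → ℝ :=
    fun k h => if znorm h ≤ znorm (k - h) then 0 else g k h with hBdef
  have hg0 : ∀ k h, 0 ≤ g k h := fun k h => by
    have h1 := w_pos h; have h2 := w_pos (k-h); have h3 := w_pos k
    rw [hgdef]
    positivity
  have hA0 : ∀ k h, 0 ≤ A k h := fun k h => by
    by_cases hc : znorm h ≤ znorm (k-h) <;> simp [hAdef, hc, hg0 k h]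
  have hB0 : ∀ k h, 0 ≤ B k h := fun k h => by
    by_cases hc : znorm h ≤ znorm (k-h) <;> simp [hBdef, hc, hg0 k h]
  have hgAB : ∀ k h, g k h = A k h + B k h := fun k h => by
    by_cases hc : znorm h ≤ znorm (k-h) <;> simp [hAdef, hBdef, hc]
  have hSn : Summable (fun h : Fin d → ℤ => (1 + znorm h ^ 2) ^ (-n)) :=
    summable_main hd hn2
  have hSnε : Summable (fun h : Fin d → ℤ => (1 + znorm h ^ 2) ^ (-(n-ε))) :=
    summable_main hd (by linarith)
  -- A: bound and summability
  have hAle : ∀ k h, A k h ≤ (4:ℝ)^(n-1) * (1 + znorm h ^ 2) ^ (-n) := fun k h => by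
    by_cases hc : znorm h ≤ znorm (k - h)
    · simpa [hAdef, hc] using gA_le hn1 hc
    · have h1 := w_pos h
      simp only [hAdef, hc, if_false]
      positivity
  have hAsum : ∀ k, Summable (A k) := fun k =>
    (hSn.mul_left _).of_nonneg_of_le (hA0 k) (hAle k)
  -- the convolution majorant
  have hbndsum : ∀ k : Fin d → ℤ, Summable (fun h : Fin d → ℤ =>
      (1 + znorm h ^ 2) ^ (-(n-ε)) + (1 + znorm (k - h) ^ 2) ^ (-(n-ε))) := fun k =>
    hSnε.add (summable_shift hSnε k)
  have hconv_le : ∀ k h : Fin d → ℤ,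
      (1 + znorm h ^ 2) ^ (-(1-ε)) * (1 + znorm (k - h) ^ 2) ^ (-(n-1))
        ≤ (1 + znorm h ^ 2) ^ (-(n-ε)) + (1 + znorm (k - h) ^ 2) ^ (-(n-ε)) := fun k h => by
    have := conv_le (a := 1-ε) (b := n-1) (by linarith) (by linarith) k h
    rwa [show (1-ε) + (n-1) = n - ε by ring] at this
  have hconv_sum : ∀ k : Fin d → ℤ, Summable (fun h : Fin d → ℤ =>
      (1 + znorm h ^ 2) ^ (-(1-ε)) * (1 + znorm (k - h) ^ 2) ^ (-(n-1))) := fun k =>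
    (hbndsum k).of_nonneg_of_le
      (fun h => by have h1 := w_pos h; have h2 := w_pos (k-h); positivity)
      (hconv_le k)
  have hconv_tsum : ∀ k : Fin d → ℤ,
      (∑' h : Fin d → ℤ, (1 + znorm h ^ 2) ^ (-(1-ε)) * (1 + znorm (k - h) ^ 2) ^ (-(n-1)))
        ≤ 2 * ∑' h : Fin d → ℤ, (1 + znorm h ^ 2) ^ (-(n-ε)) := fun k => by
    calc (∑' h : Fin d → ℤ, (1 + znorm h ^ 2) ^ (-(1-ε)) * (1 + znorm (k - h) ^ 2) ^ (-(n-1)))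
        ≤ ∑' h : Fin d → ℤ, ((1 + znorm h ^ 2) ^ (-(n-ε)) + (1 + znorm (k - h) ^ 2) ^ (-(n-ε))) :=
          Summable.tsum_le_tsum (hconv_le k) (hconv_sum k) (hbndsum k)
      _ = (∑' h : Fin d → ℤ, (1 + znorm h ^ 2) ^ (-(n-ε)))
          + ∑' h : Fin d → ℤ, (1 + znorm (k - h) ^ 2) ^ (-(n-ε)) :=
          Summable.tsum_add hSnε (summable_shift hSnε k)
      _ = 2 * ∑' h : Fin d → ℤ, (1 + znorm h ^ 2) ^ (-(n-ε)) := by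
          rw [tsum_shift (fun h => (1 + znorm h ^ 2) ^ (-(n-ε))) k]
          ring
  -- B: bound and summability
  have hBle : ∀ k h, B k h ≤ (4:ℝ)^(n-1+ε) * (1 + znorm k ^ 2) ^ (-ε) *
      ((1 + znorm h ^ 2) ^ (-(1-ε)) * (1 + znorm (k - h) ^ 2) ^ (-(n-1))) := fun k h => by
    by_cases hc : znorm h ≤ znorm (k - h)
    · have h1 := w_pos h; have h2 := w_pos (k-h); have h3 := w_pos k
      simp only [hBdef, hc, if_true]
      positivity
    · simpa [hBdef, hc] using gB_le hn1 hε0 hε1 (le_of_not_ge hc)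
  have hBsum : ∀ k, Summable (B k) := fun k =>
    ((hconv_sum k).mul_left _).of_nonneg_of_le (hB0 k) (hBle k)
  have hBtsum : ∀ k : Fin d → ℤ, (∑' h, B k h) ≤
      ((4:ℝ)^(n-1+ε) * (2 * ∑' h : Fin d → ℤ, (1 + znorm h ^ 2) ^ (-(n-ε))))
        * (1 + znorm k ^ 2) ^ (-ε) := fun k => by
    have c0 : (0:ℝ) ≤ (4:ℝ)^(n-1+ε) * (1 + znorm k ^ 2) ^ (-ε) := by
      have := w_pos k
      positivity
    calc (∑' h, B k h)
        ≤ ∑' h, ((4:ℝ)^(n-1+ε) * (1 + znorm k ^ 2) ^ (-ε) *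
            ((1 + znorm h ^ 2) ^ (-(1-ε)) * (1 + znorm (k - h) ^ 2) ^ (-(n-1)))) :=
          Summable.tsum_le_tsum (hBle k) (hBsum k) ((hconv_sum k).mul_left _)
      _ = ((4:ℝ)^(n-1+ε) * (1 + znorm k ^ 2) ^ (-ε)) *
          ∑' h, ((1 + znorm h ^ 2) ^ (-(1-ε)) * (1 + znorm (k - h) ^ 2) ^ (-(n-1))) :=
          tsum_mul_left
      _ ≤ ((4:ℝ)^(n-1+ε) * (1 + znorm k ^ 2) ^ (-ε)) *
          (2 * ∑' h : Fin d → ℤ, (1 + znorm h ^ 2) ^ (-(n-ε))) := by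
          exact mul_le_mul_of_nonneg_left (hconv_tsum k) c0
      _ = ((4:ℝ)^(n-1+ε) * (2 * ∑' h : Fin d → ℤ, (1 + znorm h ^ 2) ^ (-(n-ε))))
          * (1 + znorm k ^ 2) ^ (-ε) := by ring
  -- B sum tends to 0
  have hBtendsto : Tendsto (fun k : Fin d → ℤ => ∑' h, B k h) cofinite (nhds 0) := by
    apply squeeze_zero (fun k => tsum_nonneg (hB0 k)) hBtsum
    have h1 : Tendsto (fun x : ℝ => x ^ (-ε)) atTop (nhds 0) := tendsto_rpow_neg_atTop hε0
    have h2 := (h1.comp (tendsto_w (d := d))).const_mul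
      ((4:ℝ)^(n-1+ε) * (2 * ∑' h : Fin d → ℤ, (1 + znorm h ^ 2) ^ (-(n-ε))))
    simpa using h2
  -- A sum tends to Σ
  have hAtendsto : Tendsto (fun k : Fin d → ℤ => ∑' h, A k h) cofinite
      (nhds (∑' h : Fin d → ℤ, (1 + znorm h ^ 2) ^ (-n))) := by
    apply tendsto_tsum_of_dominated_convergence
      (bound := fun h : Fin d → ℤ => (4:ℝ)^(n-1) * (1 + znorm h ^ 2) ^ (-n))
      (hSn.mul_left _)
    · intro h
      have hev : ∀ᶠ k in (cofinite : Filter (Fin d → ℤ)), g k h = A k h := by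
        filter_upwards [(tendsto_znorm_sub h).eventually_ge_atTop (znorm h)] with k hk
        simp [hAdef, hk]
      exact (g_tendsto hn1 h).congr' hev
    · exact Filter.Eventually.of_forall fun k h => by
        rw [Real.norm_eq_abs, abs_of_nonneg (hA0 k h)]
        exact hAle k h
  have hfinal := hAtendsto.add hBtendsto
  rw [add_zero] at hfinal
  refine hfinal.congr fun k => ?_
  rw [← Summable.tsum_add (hAsum k) (hBsum k)]
  exact tsum_congr fun h => (hgAB k h).symm

end Stmt19

open Stmt19 in
/-- Properties of `𝒦_n(k) = (1+|k|²)^(n−1)(2π)^(−d) ∑_h |k−h|²/((1+|h|²)^n (1+|k−h|²)^n)`: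
each `𝒦_n(k)` is finite, `𝒦_n(k) → Σ_n` as `k → ∞`, and `sup_k 𝒦_n(k)` is finite. -/
theorem stmt_19 (d : ℕ) (hd : 2 ≤ d) (n : ℝ) (hn : (d : ℝ) / 2 < n)
    (KK : (Fin d → ℤ) → ℝ)
    (hKK : ∀ k, KK k = (1 + znorm k ^ 2) ^ (n - 1) / (2 * Real.pi) ^ d *
      ∑' h : Fin d → ℤ,
        znorm (k - h) ^ 2 /
          ((1 + znorm h ^ 2) ^ n * (1 + znorm (k - h) ^ 2) ^ n)) :
    (∀ k : Fin d → ℤ, Summable (fun h : Fin d → ℤ =>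
      znorm (k - h) ^ 2 /
        ((1 + znorm h ^ 2) ^ n * (1 + znorm (k - h) ^ 2) ^ n))) ∧
    Filter.Tendsto KK Filter.cofinite
      (nhds ((∑' h : Fin d → ℤ, (1 + znorm h ^ 2) ^ (-n)) / (2 * Real.pi) ^ d)) ∧
    BddAbove (Set.range KK) := by
  have hd0 : 0 < d := by omega
  have hd2 : (2:ℝ) ≤ (d:ℝ) := by exact_mod_cast hd
  have hn1 : (1:ℝ) ≤ n := by linarith
  have hn2 : (d:ℝ) < 2*n := by linarith
  have hSn : Summable (fun h : Fin d → ℤ => (1 + znorm h ^ 2) ^ (-n)) :=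
    summable_main hd0 hn2
  have hts : ∀ k : Fin d → ℤ, Summable (fun h : Fin d → ℤ =>
      znorm (k - h) ^ 2 / ((1 + znorm h ^ 2) ^ n * (1 + znorm (k - h) ^ 2) ^ n)) := fun k =>
    hSn.of_nonneg_of_le
      (fun h => by
        have h1 := w_pos h; have h2 := w_pos (k-h)
        positivity)
      (fun h => tm_le hn1 k h)
  have hKK' : ∀ k, KK k = (∑' h : Fin d → ℤ,
      (1 + znorm k ^ 2) ^ (n-1) *
        (znorm (k - h) ^ 2 / ((1 + znorm h ^ 2) ^ n * (1 + znorm (k - h) ^ 2) ^ n)))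
      / (2 * Real.pi) ^ d := fun k => by
    rw [hKK k, tsum_mul_left]
    ring
  have hTK : Filter.Tendsto KK Filter.cofinite
      (nhds ((∑' h : Fin d → ℤ, (1 + znorm h ^ 2) ^ (-n)) / (2 * Real.pi) ^ d)) := by
    have := (tendsto_sum_g hd0 hn1 hn2).div_const ((2 * Real.pi) ^ d)
    exact this.congr fun k => (hKK' k).symm
  refine ⟨hts, hTK, ?_⟩
  set L := (∑' h : Fin d → ℤ, (1 + znorm h ^ 2) ^ (-n)) / (2 * Real.pi) ^ d with hL
  have hev : ∀ᶠ k in Filter.cofinite, KK k ≤ L + 1 :=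
    hTK.eventually (eventually_le_nhds (lt_add_one L))
  rw [Filter.eventually_cofinite] at hev
  have hsub : Set.range KK ⊆ (KK '' {k | ¬ KK k ≤ L + 1}) ∪ Set.Iic (L + 1) := by
    rintro x ⟨k, rfl⟩
    by_cases hc : KK k ≤ L + 1
    · exact Or.inr hc
    · exact Or.inl ⟨k, hc, rfl⟩
  exact BddAbove.mono hsub (((hev.image KK).bddAbove).union bddAbove_Iic)
end
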